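/- arXiv:1002.2190 — 2 statements merged into one kernel-verified Lean document; each statement's English description precedes it below -/
import Mathlib

section
/- Fix an integer p ≥ 1, real parameters (β_q)_{q≥1} with only finitely many nonzero, h ∈ ℝ, and let β_p' > β_p and γ > 0. Suppose that for each x ∈ {β_p − γ, β_p, β_p', β_p' + γ} the free energy F_N(x) (the free energy of the mixed model in which the coefficient β_p of H_p is replaced by x) converges as N → ∞ to a limit P(x). Then limsup_{N→∞} N^{−1} E⟨|H_p(σ) − ⟨H_p(σ)⟩_{β_p}|⟩_{β_p} ≤ 8·((P(β_p'+γ) − P(β_p'))/γ − (P(β_p) − P(β_p−γ))/γ). -/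
open MeasureTheory ProbabilityTheory Filter

noncomputable section

/-- A spin configuration on `N` sites; `true ↦ +1`, `false ↦ -1`. -/
abbrev Config (N : ℕ) := Fin N → Bool

/-- The spin value of a site. -/
def spin (b : Bool) : ℝ := if b then 1 else -1

variable {Ω : Type*} [MeasurableSpace Ω]

/-- The `p`-spin Hamiltonian
`H_p(σ) = N^{-(p-1)/2} ∑_{i₁,…,i_p} g_{i₁,…,i_p} σ_{i₁}⋯σ_{i_p}`. -/
def Hp (N p : ℕ) (g : (Fin p → Fin N) → Ω → ℝ) (σ : Config N) (ω : Ω) : ℝ :=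
  (N : ℝ) ^ (-(((p : ℝ) - 1) / 2)) *
    ∑ i : Fin p → Fin N, g i ω * ∏ k, spin (σ (i k))

/-- The Boltzmann weight `exp(∑_q β_q H_q(σ) + h ∑_i σ_i)`. -/
def weight (N : ℕ) (β : ℕ → ℝ) (h : ℝ)
    (g : (q : ℕ) → (Fin q → Fin N) → Ω → ℝ) (σ : Config N) (ω : Ω) : ℝ :=
  Real.exp ((∑ᶠ q, β q * Hp N q (g q) σ ω) + h * ∑ i, spin (σ i))

/-- The partition function `Z_N`. -/
def Zpart (N : ℕ) (β : ℕ → ℝ) (h : ℝ)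
    (g : (q : ℕ) → (Fin q → Fin N) → Ω → ℝ) (ω : Ω) : ℝ :=
  ∑ σ : Config N, weight N β h g σ ω

/-- The Gibbs measure `G_N(σ)`. -/
def gibbs (N : ℕ) (β : ℕ → ℝ) (h : ℝ)
    (g : (q : ℕ) → (Fin q → Fin N) → Ω → ℝ) (σ : Config N) (ω : Ω) : ℝ :=
  weight N β h g σ ω / Zpart N β h g ω

/-- The Gibbs average `⟨f⟩` of a (possibly random) function of `n` replicas. -/
def gibbsAvg (N : ℕ) (β : ℕ → ℝ) (h : ℝ)
    (g : (q : ℕ) → (Fin q → Fin N) → Ω → ℝ) (n : ℕ)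
    (f : (Fin n → Config N) → Ω → ℝ) (ω : Ω) : ℝ :=
  ∑ σs : Fin n → Config N, f σs ω * ∏ l, gibbs N β h g (σs l) ω

/-- The overlap `R_{1,2}` of two configurations. -/
def overlapR (N : ℕ) (σ τ : Config N) : ℝ :=
  (N : ℝ)⁻¹ * ∑ i, spin (σ i) * spin (τ i)

/-- The random free energy `ψ_N = N⁻¹ log Z_N`. -/
def psiFE (N : ℕ) (β : ℕ → ℝ) (h : ℝ)
    (g : (q : ℕ) → (Fin q → Fin N) → Ω → ℝ) (ω : Ω) : ℝ :=
  (N : ℝ)⁻¹ * Real.log (Zpart N β h g ω)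

/-- The disorder of the mixed model, for all `p`, is an i.i.d. standard Gaussian family. -/
def IsGaussianDisorder (N : ℕ) (g : (q : ℕ) → (Fin q → Fin N) → Ω → ℝ)
    (μ : Measure Ω) : Prop :=
  (∀ q (i : Fin q → Fin N), Measurable (g q i)) ∧
  (∀ q (i : Fin q → Fin N), Measure.map (g q i) μ = gaussianReal 0 1) ∧
  iIndepFun
    (fun qi : Σ q : ℕ, (Fin q → Fin N) => g qi.1 qi.2) μ

end

open Real Finset

lemma sumexp_pos {ι : Type*} [Fintype ι] [Nonempty ι] (E : ι → ℝ) :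
    0 < ∑ i, Real.exp (E i) :=
  Finset.sum_pos (fun i _ => Real.exp_pos _) Finset.univ_nonempty

lemma convexOn_logsumexp {ι : Type*} [Fintype ι] [Nonempty ι] (H A : ι → ℝ) :
    ConvexOn ℝ Set.univ (fun t => Real.log (∑ i, Real.exp (H i * t + A i))) := by
  refine ⟨convex_univ, fun x _ y _ a b ha hb hab => ?_⟩
  set S := ∑ i, Real.exp (H i * x + A i) with hS
  set T := ∑ i, Real.exp (H i * y + A i) with hT
  have hSpos : 0 < S := sumexp_pos _
  have hTpos : 0 < T := sumexp_pos _
  have key : ∑ i, Real.exp (H i * (a • x + b • y) + A i) ≤ S ^ a * T ^ b := by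
    have hterm : ∀ i : ι, Real.exp (H i * (a • x + b • y) + A i)
        ≤ S ^ a * T ^ b * (a * (Real.exp (H i * x + A i) / S) + b * (Real.exp (H i * y + A i) / T)) := by
      intro i
      have h1 : Real.exp (H i * (a • x + b • y) + A i)
          = Real.exp (H i * x + A i) ^ a * Real.exp (H i * y + A i) ^ b := by
        rw [← Real.exp_mul, ← Real.exp_mul, ← Real.exp_add]
        congr 1
        simp only [smul_eq_mul]
        linear_combination (-(A i)) * hab
      have h2 : Real.exp (H i * x + A i) ^ a * Real.exp (H i * y + A i) ^ b
          = (S ^ a * T ^ b) * ((Real.exp (H i * x + A i) / S) ^ a * (Real.exp (H i * y + A i) / T) ^ b) := by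
        rw [Real.div_rpow (Real.exp_pos _).le hSpos.le, Real.div_rpow (Real.exp_pos _).le hTpos.le]
        field_simp
      rw [h1, h2]
      have h3 : (Real.exp (H i * x + A i) / S) ^ a * (Real.exp (H i * y + A i) / T) ^ b
          ≤ a * (Real.exp (H i * x + A i) / S) + b * (Real.exp (H i * y + A i) / T) :=
        Real.geom_mean_le_arith_mean2_weighted ha hb (by positivity) (by positivity) hab
      have h4 : (0:ℝ) ≤ S ^ a * T ^ b := by positivity
      nlinarith [h3, h4]
    calc ∑ i, Real.exp (H i * (a • x + b • y) + A i)
        ≤ ∑ i, S ^ a * T ^ b * (a * (Real.exp (H i * x + A i) / S) + b * (Real.exp (H i * y + A i) / T)) :=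
          Finset.sum_le_sum fun i _ => hterm i
      _ = S ^ a * T ^ b := by
          rw [← Finset.mul_sum]
          have : ∑ i, (a * (Real.exp (H i * x + A i) / S) + b * (Real.exp (H i * y + A i) / T))
              = a * (S / S) + b * (T / T) := by
            rw [Finset.sum_add_distrib]
            simp_rw [div_eq_mul_inv, ← Finset.mul_sum, ← Finset.sum_mul]
            rw [← hS, ← hT]
          rw [this, div_self hSpos.ne', div_self hTpos.ne']
          rw [mul_one, mul_one, hab, mul_one]
  calc Real.log (∑ i, Real.exp (H i * (a • x + b • y) + A i))
      ≤ Real.log (S ^ a * T ^ b) := Real.log_le_log (sumexp_pos _) key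
    _ = a • Real.log S + b • Real.log T := by
        rw [Real.log_mul (by positivity) (by positivity), Real.log_rpow hSpos, Real.log_rpow hTpos]
        simp [smul_eq_mul]

open Real Finset

lemma sumexp_pos' {ι : Type*} [Fintype ι] [Nonempty ι] (E : ι → ℝ) :
    0 < ∑ i, Real.exp (E i) :=
  Finset.sum_pos (fun i _ => Real.exp_pos _) Finset.univ_nonempty

lemma convexOn_logsumexp' {ι : Type*} [Fintype ι] [Nonempty ι] (H A : ι → ℝ) :
    ConvexOn ℝ Set.univ (fun t => Real.log (∑ i, Real.exp (H i * t + A i))) :=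
  convexOn_logsumexp H A

set_option maxHeartbeats 1000000 in
lemma gibbs_key {ι : Type*} [Fintype ι] [Nonempty ι] (H A : ι → ℝ) {x b γ : ℝ}
    (hγ : 0 < γ) (hxb : x < b) :
    (Real.log (∑ i, Real.exp (H i * x + A i)) - Real.log (∑ i, Real.exp (H i * (x - γ) + A i))) / γ
      ≤ (Real.log (∑ i, Real.exp (H i * (b + γ) + A i)) - Real.log (∑ i, Real.exp (H i * b + A i))) / γ
    ∧ ∑ i, Real.exp (H i * x + A i) / (∑ j, Real.exp (H j * x + A j)) *
        |H i - ∑ j, Real.exp (H j * x + A j) / (∑ k, Real.exp (H k * x + A k)) * H j|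
      ≤ 2 * ((Real.log (∑ i, Real.exp (H i * (b + γ) + A i)) - Real.log (∑ i, Real.exp (H i * b + A i))) / γ
           - (Real.log (∑ i, Real.exp (H i * x + A i)) - Real.log (∑ i, Real.exp (H i * (x - γ) + A i))) / γ)
        + 2 * Real.log 2 / (b + γ - x) := by
  have hZ : ∀ t : ℝ, 0 < ∑ i, Real.exp (H i * t + A i) := fun t => sumexp_pos' _
  set Z : ℝ → ℝ := fun t => ∑ i, Real.exp (H i * t + A i) with hZdef
  set L : ℝ → ℝ := fun t => Real.log (Z t) with hLdef
  set G : ι → ℝ := fun i => Real.exp (H i * x + A i) / Z x with hGdef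
  have hG0 : ∀ i, 0 ≤ G i := fun i => div_nonneg (Real.exp_pos _).le (hZ x).le
  have hG1 : ∑ i, G i = 1 := by
    simp only [hGdef]; rw [← Finset.sum_div]; exact div_self (hZ x).ne'
  set m : ℝ := ∑ j, G j * H j with hmdef
  set s : ℝ := b + γ - x with hsdef
  have hs : 0 < s := by simp only [hsdef]; linarith
  have hxs : x + s = b + γ := by simp only [hsdef]; ring
  set R₀ : ℝ := (L x - L (x - γ)) / γ with hR0def
  set R₁ : ℝ := (L (b + γ) - L b) / γ with hR1def
  have hconv := convexOn_logsumexp' H A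
  have adj1 : (L x - L (x - γ)) / γ ≤ (L b - L x) / (b - x) := by
    have h := hconv.slope_mono_adjacent (Set.mem_univ (x - γ)) (Set.mem_univ b)
      (by linarith : x - γ < x) hxb
    have hden : x - (x - γ) = γ := by ring
    rwa [hden] at h
  have adj2 : (L b - L x) / (b - x) ≤ (L (b + γ) - L b) / γ := by
    have h := hconv.slope_mono_adjacent (Set.mem_univ x) (Set.mem_univ (b + γ))
      hxb (by linarith : b < b + γ)
    have hden : b + γ - b = γ := by ring
    rwa [hden] at h
  have hR01 : R₀ ≤ R₁ := le_trans adj1 adj2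
  constructor
  · exact hR01
  -- Jensen lower bound: R₀ ≤ m
  have jensen_low : R₀ ≤ m := by
    have hZlow : Z x * Real.exp (-(γ * m)) ≤ Z (x - γ) := by
      have hexp : Real.exp (∑ i, G i • (-(γ * H i))) ≤ ∑ i, G i • Real.exp (-(γ * H i)) :=
        convexOn_exp.map_sum_le (fun i _ => hG0 i) hG1 (fun i _ => Set.mem_univ _)
      have hsum : ∑ i, G i • (-(γ * H i)) = -(γ * m) := by
        simp only [smul_eq_mul, hmdef, Finset.mul_sum, ← Finset.sum_neg_distrib]
        congr 1; funext i; ring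
      have hZx : Z (x - γ) = Z x * ∑ i, G i • Real.exp (-(γ * H i)) := by
        simp only [hZdef, Finset.mul_sum]
        congr 1; funext i
        simp only [smul_eq_mul, hGdef]
        rw [mul_comm (Real.exp (H i * x + A i) / (∑ j, Real.exp (H j * x + A j))) _,
          ← mul_assoc, mul_comm _ (Real.exp (-(γ * H i))), mul_assoc,
          mul_div_cancel₀ _ (hZ x).ne', ← Real.exp_add]
        congr 1; ring
      rw [hZx, ← hsum]
      exact mul_le_mul_of_nonneg_left hexp (hZ x).le
    have hlog := Real.log_le_log (by positivity) hZlow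
    rw [Real.log_mul (hZ x).ne' (Real.exp_pos _).ne', Real.log_exp] at hlog
    rw [hR0def, div_le_iff₀ hγ]
    simp only [hLdef]
    nlinarith [hlog]
  -- convexity upper bound
  have bound_up : L (x + s) - L x ≤ s * R₁ := by
    rw [hxs]
    have hbx : 0 < b - x := by linarith
    have h1 : L b - L x ≤ (b - x) * R₁ := by
      rw [div_le_iff₀ hbx] at adj2
      rw [hR1def]; linarith [adj2]
    have h2 : L (b + γ) - L b = γ * R₁ := by
      rw [hR1def]; field_simp
    have h3 : L (b + γ) - L x = (L b - L x) + (L (b + γ) - L b) := by ring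
    rw [h3, h2, hsdef]
    nlinarith [h1]
  -- main chain
  have habs : ∀ t : ℝ, |t| = 2 * max t 0 - t := by
    intro t
    rcases le_total t 0 with ht | ht
    · rw [abs_of_nonpos ht, max_eq_right ht]; ring
    · rw [abs_of_nonneg ht, max_eq_left ht]; ring
  have T2 : ∑ i, G i * |H i - m| = 2 * ∑ i, G i * max (H i - m) 0 := by
    have hmzero : ∑ i, G i * (H i - m) = 0 := by
      simp only [mul_sub]
      rw [Finset.sum_sub_distrib, ← Finset.sum_mul, hG1, one_mul, hmdef]
      exact sub_self _
    calc ∑ i, G i * |H i - m| = ∑ i, (2 * (G i * max (H i - m) 0) - G i * (H i - m)) := by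
          congr 1; funext i; rw [habs (H i - m)]; ring
      _ = 2 * ∑ i, G i * max (H i - m) 0 := by
          rw [Finset.sum_sub_distrib, hmzero, Finset.mul_sum]; ring
  set y : ι → ℝ := fun i => 1 + Real.exp (s * (H i - m)) with hydef
  have hy : ∀ i, 0 < y i := fun i => by positivity
  have step1 : ∀ i, s * max (H i - m) 0 ≤ Real.log (y i) := by
    intro i
    rcases le_or_gt (H i - m) 0 with hle | hlt
    · rw [max_eq_right hle, mul_zero]
      apply Real.log_nonneg
      simp only [hydef]
      nlinarith [Real.exp_pos (s * (H i - m))]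
    · rw [max_eq_left hlt.le]
      calc s * (H i - m) = Real.log (Real.exp (s * (H i - m))) := (Real.log_exp _).symm
        _ ≤ Real.log (y i) := Real.log_le_log (Real.exp_pos _)
            (by simp only [hydef]; linarith)
  have step2 : ∑ i, G i * Real.log (y i) ≤ Real.log (∑ i, G i * y i) := by
    have h := (strictConcaveOn_log_Ioi.concaveOn).le_map_sum (t := Finset.univ)
      (w := G) (p := y) (fun i _ => hG0 i) hG1 (fun i _ => hy i)
    simpa [smul_eq_mul] using h
  set R : ℝ := Real.exp (-(s * m)) * (Z (x + s) / Z x) with hRdef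
  have hRpos : 0 < R := by
    rw [hRdef]
    have := hZ (x + s); have := hZ x
    positivity
  have step3 : ∑ i, G i * y i = 1 + R := by
    have hterm : ∀ i, G i * y i
        = G i + Real.exp (-(s * m)) * (Real.exp (H i * (x + s) + A i) / Z x) := by
      intro i
      simp only [hydef, hGdef, mul_add, mul_one]
      congr 1
      rw [div_mul_eq_mul_div, ← Real.exp_add, mul_div_assoc', ← Real.exp_add]
      congr 2; ring
    calc ∑ i, G i * y i
        = ∑ i, (G i + Real.exp (-(s * m)) * (Real.exp (H i * (x + s) + A i) / Z x)) :=
          Finset.sum_congr rfl (fun i _ => hterm i)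
      _ = 1 + R := by
          rw [Finset.sum_add_distrib, hG1, ← Finset.mul_sum, ← Finset.sum_div, hRdef]
  have step4 : Real.log (1 + R) ≤ Real.log 2 + max (Real.log R) 0 := by
    rcases le_or_gt R 1 with hR1' | hR1'
    · have h := Real.log_le_log (by positivity) (by linarith : 1 + R ≤ 2)
      have := le_max_right (Real.log R) 0
      linarith
    · have h := Real.log_le_log (by positivity) (by linarith : 1 + R ≤ 2 * R)
      rw [Real.log_mul two_ne_zero hRpos.ne'] at h
      have := le_max_left (Real.log R) 0
      linarith
  have step5 : Real.log R = (L (x + s) - L x) - s * m := by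
    rw [hRdef, Real.log_mul (Real.exp_pos _).ne' (by positivity : (Z (x+s) / Z x) ≠ 0),
      Real.log_exp, Real.log_div (hZ (x+s)).ne' (hZ x).ne']
    simp only [hLdef]; ring
  have hmax : max (Real.log R) 0 ≤ s * (R₁ - R₀) := by
    have h1 : Real.log R ≤ s * (R₁ - R₀) := by
      rw [step5]
      have : s * R₀ ≤ s * m := mul_le_mul_of_nonneg_left jensen_low hs.le
      nlinarith [bound_up]
    have h2 : (0:ℝ) ≤ s * (R₁ - R₀) := by nlinarith [hR01]
    exact max_le h1 h2
  have chain : s * ∑ i, G i * max (H i - m) 0 ≤ Real.log 2 + s * (R₁ - R₀) := by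
    have e1 : s * ∑ i, G i * max (H i - m) 0 = ∑ i, G i * (s * max (H i - m) 0) := by
      rw [Finset.mul_sum]; congr 1; funext i; ring
    have e2 : ∑ i, G i * (s * max (H i - m) 0) ≤ ∑ i, G i * Real.log (y i) :=
      Finset.sum_le_sum fun i _ => mul_le_mul_of_nonneg_left (step1 i) (hG0 i)
    calc s * ∑ i, G i * max (H i - m) 0 = ∑ i, G i * (s * max (H i - m) 0) := e1
      _ ≤ ∑ i, G i * Real.log (y i) := e2
      _ ≤ Real.log (∑ i, G i * y i) := step2
      _ = Real.log (1 + R) := by rw [step3]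
      _ ≤ Real.log 2 + max (Real.log R) 0 := step4
      _ ≤ Real.log 2 + s * (R₁ - R₀) := by linarith [hmax]
  show ∑ i, G i * |H i - m| ≤ 2 * (R₁ - R₀) + 2 * Real.log 2 / s
  rw [T2]
  have hfinal : ∑ i, G i * max (H i - m) 0 ≤ (R₁ - R₀) + Real.log 2 / s := by
    rw [← mul_le_mul_iff_right₀ hs]
    calc s * ∑ i, G i * max (H i - m) 0 ≤ Real.log 2 + s * (R₁ - R₀) := chain
      _ = s * ((R₁ - R₀) + Real.log 2 / s) := by field_simp; ring
  have h2s : 2 * Real.log 2 / s = 2 * (Real.log 2 / s) := by ring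
  linarith [hfinal]


noncomputable section
open Real Finset MeasureTheory ProbabilityTheory Filter
open scoped NNReal

namespace St10

variable {Ω : Type*} [MeasurableSpace Ω]

/-- The non-`p` part of the energy. -/
def Arest (N p : ℕ) (β : ℕ → ℝ) (h : ℝ) (g : (q : ℕ) → (Fin q → Fin N) → Ω → ℝ)
    (T : Finset ℕ) (σ : Config N) (ω : Ω) : ℝ :=
  (∑ q ∈ T.erase p, β q * Hp N q (g q) σ ω) + h * ∑ i, spin (σ i)

lemma weight_update_eq (N p : ℕ) (β : ℕ → ℝ) (hβ : (Function.support β).Finite) (h x : ℝ)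
    (g : (q : ℕ) → (Fin q → Fin N) → Ω → ℝ) (σ : Config N) (ω : Ω) :
    weight N (Function.update β p x) h g σ ω =
      Real.exp (Hp N p (g p) σ ω * x + Arest N p β h g hβ.toFinset σ ω) := by
  unfold weight Arest
  congr 1
  have hsupp : Function.support (fun q => Function.update β p x q * Hp N q (g q) σ ω)
      ⊆ ((insert p hβ.toFinset : Finset ℕ) : Set ℕ) := by
    intro q hq
    simp only [Function.mem_support, ne_eq] at hq
    have hq' : Function.update β p x q ≠ 0 := fun h0 => hq (by rw [h0, zero_mul])
    by_cases hqp : q = p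
    · simp [hqp]
    · rw [Function.update_of_ne hqp] at hq'
      simp only [Finset.coe_insert, Set.mem_insert_iff, Finset.mem_coe,
        Set.Finite.mem_toFinset, Function.mem_support]
      exact Or.inr hq'
  rw [finsum_eq_sum_of_support_subset _ hsupp]
  have hins : insert p hβ.toFinset = insert p (hβ.toFinset.erase p) := by
    ext q
    simp only [Finset.mem_insert, Finset.mem_erase]
    tauto
  rw [hins, Finset.sum_insert (Finset.notMem_erase _ _), Function.update_self]
  rw [Finset.sum_congr rfl
    (fun q hq => by rw [Function.update_of_ne (Finset.mem_erase.mp hq).1])]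
  ring

lemma config_card_pos (N : ℕ) : 0 < Fintype.card (Config N) := Fintype.card_pos

/-- energy of configuration in the `x`-updated model -/
def Efun (N p : ℕ) (β : ℕ → ℝ) (hβ : (Function.support β).Finite) (h x : ℝ)
    (g : (q : ℕ) → (Fin q → Fin N) → Ω → ℝ) (σ : Config N) (ω : Ω) : ℝ :=
  Hp N p (g p) σ ω * x + Arest N p β h g hβ.toFinset σ ω

lemma Zpart_update_eq (N p : ℕ) (β : ℕ → ℝ) (hβ : (Function.support β).Finite) (h x : ℝ)
    (g : (q : ℕ) → (Fin q → Fin N) → Ω → ℝ) (ω : Ω) :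
    Zpart N (Function.update β p x) h g ω = ∑ σ, Real.exp (Efun N p β hβ h x g σ ω) := by
  unfold Zpart Efun
  exact Finset.sum_congr rfl fun σ _ => weight_update_eq N p β hβ h x g σ ω

lemma Zpart_pos (N p : ℕ) (β : ℕ → ℝ) (hβ : (Function.support β).Finite) (h x : ℝ)
    (g : (q : ℕ) → (Fin q → Fin N) → Ω → ℝ) (ω : Ω) :
    0 < Zpart N (Function.update β p x) h g ω := by
  rw [Zpart_update_eq N p β hβ h x g ω]
  exact Finset.sum_pos (fun σ _ => Real.exp_pos _) Finset.univ_nonempty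

lemma gibbsAvg_one (N : ℕ) (β : ℕ → ℝ) (h : ℝ) (g : (q : ℕ) → (Fin q → Fin N) → Ω → ℝ)
    (f : Config N → Ω → ℝ) (ω : Ω) :
    gibbsAvg N β h g 1 (fun σs ω' => f (σs 0) ω') ω = ∑ σ, f σ ω * gibbs N β h g σ ω := by
  unfold gibbsAvg
  rw [← Equiv.sum_comp (Equiv.funUnique (Fin 1) (Config N)).symm
    (fun σs => f (σs 0) ω * ∏ l, gibbs N β h g (σs l) ω)]
  refine Finset.sum_congr rfl fun σ _ => ?_
  simp [Equiv.funUnique, Fin.prod_univ_one]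

lemma measurable_Hp (N q : ℕ) (g : (Fin q → Fin N) → Ω → ℝ)
    (hg : ∀ i, Measurable (g i)) (σ : Config N) :
    Measurable (fun ω => Hp N q g σ ω) := by
  unfold Hp
  exact (Finset.measurable_sum _ (fun i _ => (hg i).mul_const _)).const_mul _

lemma measurable_Arest (N p : ℕ) (β : ℕ → ℝ) (hβ : (Function.support β).Finite) (h : ℝ)
    (g : (q : ℕ) → (Fin q → Fin N) → Ω → ℝ) (hg : ∀ q i, Measurable (g q i)) (σ : Config N) :
    Measurable (fun ω => Arest N p β h g hβ.toFinset σ ω) := by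
  unfold Arest
  exact (Finset.measurable_sum _ (fun q _ =>
    (measurable_Hp N q (g q) (hg q) σ).const_mul _)).add_const _

lemma measurable_Efun (N p : ℕ) (β : ℕ → ℝ) (hβ : (Function.support β).Finite) (h x : ℝ)
    (g : (q : ℕ) → (Fin q → Fin N) → Ω → ℝ) (hg : ∀ q i, Measurable (g q i)) (σ : Config N) :
    Measurable (fun ω => Efun N p β hβ h x g σ ω) := by
  unfold Efun
  exact ((measurable_Hp N p (g p) (hg p) σ).mul_const _).add
    (measurable_Arest N p β hβ h g hg σ)

lemma measurable_Zpart_update (N p : ℕ) (β : ℕ → ℝ) (hβ : (Function.support β).Finite) (h x : ℝ)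
    (g : (q : ℕ) → (Fin q → Fin N) → Ω → ℝ) (hg : ∀ q i, Measurable (g q i)) :
    Measurable (fun ω => Zpart N (Function.update β p x) h g ω) := by
  simp only [Zpart_update_eq N p β hβ h x g]
  exact Finset.measurable_sum _ (fun σ _ => (measurable_Efun N p β hβ h x g hg σ).exp)

lemma measurable_log_Zpart_update (N p : ℕ) (β : ℕ → ℝ) (hβ : (Function.support β).Finite)
    (h x : ℝ) (g : (q : ℕ) → (Fin q → Fin N) → Ω → ℝ) (hg : ∀ q i, Measurable (g q i)) :
    Measurable (fun ω => Real.log (Zpart N (Function.update β p x) h g ω)) :=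
  (measurable_Zpart_update N p β hβ h x g hg).log

lemma measurable_gibbs_update (N p : ℕ) (β : ℕ → ℝ) (hβ : (Function.support β).Finite) (h x : ℝ)
    (g : (q : ℕ) → (Fin q → Fin N) → Ω → ℝ) (hg : ∀ q i, Measurable (g q i)) (σ : Config N) :
    Measurable (fun ω => gibbs N (Function.update β p x) h g σ ω) := by
  unfold gibbs
  refine Measurable.div ?_ (measurable_Zpart_update N p β hβ h x g hg)
  have heq : weight N (Function.update β p x) h g σ
      = fun ω => Real.exp (Efun N p β hβ h x g σ ω) := by
    funext ω; exact weight_update_eq N p β hβ h x g σ ω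
  rw [heq]
  exact (measurable_Efun N p β hβ h x g hg σ).exp

lemma integrable_id_gaussianReal : Integrable (fun x : ℝ => x) (gaussianReal 0 1) := by
  rw [gaussianReal_of_var_ne_zero _ one_ne_zero]
  rw [integrable_withDensity_iff (measurable_gaussianPDF _ _)
    (ae_of_all _ fun x => ENNReal.ofReal_lt_top)]
  have heq : (fun x : ℝ => x * (gaussianPDF 0 1 x).toReal)
      = fun x : ℝ => (√(2 * π * ((1:ℝ≥0):ℝ)))⁻¹ * (x ^ (1:ℝ) * Real.exp (-2⁻¹ * x ^ 2)) := by
    funext x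
    rw [gaussianPDF, ENNReal.toReal_ofReal (gaussianPDFReal_nonneg _ _ _), gaussianPDFReal]
    rw [Real.rpow_one]
    have harg : -(x - 0) ^ 2 / (2 * ((1:ℝ≥0):ℝ)) = -2⁻¹ * x ^ 2 := by
      push_cast
      ring
    rw [harg]
    ring
  rw [heq]
  exact (integrable_rpow_mul_exp_neg_mul_sq (by norm_num) (by norm_num)).const_mul _

lemma integrable_g {μ : Measure Ω} {N q : ℕ} {g : (Fin q → Fin N) → Ω → ℝ}
    (i : Fin q → Fin N) (hm : Measurable (g i))
    (hl : Measure.map (g i) μ = gaussianReal 0 1) : Integrable (g i) μ := by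
  have h1 : Integrable (fun x : ℝ => x) (Measure.map (g i) μ) := by
    rw [hl]; exact integrable_id_gaussianReal
  have h2 := h1.comp_aemeasurable hm.aemeasurable
  exact h2

end St10

namespace St10
variable {Ω : Type*} [MeasurableSpace Ω]
open Real Finset MeasureTheory ProbabilityTheory

lemma Zpart_update_eq' (N p : ℕ) (β : ℕ → ℝ) (hβ : (Function.support β).Finite) (h x : ℝ)
    (g : (q : ℕ) → (Fin q → Fin N) → Ω → ℝ) (ω : Ω) :
    Zpart N (Function.update β p x) h g ω
      = ∑ σ, Real.exp (Hp N p (g p) σ ω * x + Arest N p β h g hβ.toFinset σ ω) :=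
  Zpart_update_eq N p β hβ h x g ω

lemma integrable_Hp {μ : Measure Ω} (N q : ℕ) (g : (Fin q → Fin N) → Ω → ℝ)
    (hm : ∀ i, Measurable (g i)) (hl : ∀ i, Measure.map (g i) μ = gaussianReal 0 1)
    (σ : Config N) : Integrable (fun ω => Hp N q g σ ω) μ := by
  unfold Hp
  exact (integrable_finset_sum _
    (fun i _ => (integrable_g i (hm i) (hl i)).mul_const _)).const_mul _

lemma integrable_Arest {μ : Measure Ω} [IsFiniteMeasure μ] (N p : ℕ) (β : ℕ → ℝ)
    (hβ : (Function.support β).Finite) (h : ℝ) (g : (q : ℕ) → (Fin q → Fin N) → Ω → ℝ)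
    (hm : ∀ q i, Measurable (g q i)) (hl : ∀ q i, Measure.map (g q i) μ = gaussianReal 0 1)
    (σ : Config N) : Integrable (fun ω => Arest N p β h g hβ.toFinset σ ω) μ := by
  unfold Arest
  exact (integrable_finset_sum _
    (fun q _ => (integrable_Hp N q (g q) (hm q) (hl q) σ).const_mul _)).add (integrable_const _)

lemma integrable_Efun {μ : Measure Ω} [IsFiniteMeasure μ] (N p : ℕ) (β : ℕ → ℝ)
    (hβ : (Function.support β).Finite) (h x : ℝ) (g : (q : ℕ) → (Fin q → Fin N) → Ω → ℝ)
    (hm : ∀ q i, Measurable (g q i)) (hl : ∀ q i, Measure.map (g q i) μ = gaussianReal 0 1)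
    (σ : Config N) : Integrable (fun ω => Efun N p β hβ h x g σ ω) μ := by
  unfold Efun
  exact ((integrable_Hp N p (g p) (hm p) (hl p) σ).mul_const _).add
    (integrable_Arest N p β hβ h g hm hl σ)

lemma abs_log_Zpart_le (N p : ℕ) (β : ℕ → ℝ) (hβ : (Function.support β).Finite) (h x : ℝ)
    (g : (q : ℕ) → (Fin q → Fin N) → Ω → ℝ) (ω : Ω) :
    |Real.log (Zpart N (Function.update β p x) h g ω)|
      ≤ Real.log (Fintype.card (Config N)) + ∑ σ, |Efun N p β hβ h x g σ ω| := by
  have hB0 : 0 ≤ ∑ σ, |Efun N p β hβ h x g σ ω| :=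
    Finset.sum_nonneg fun σ _ => abs_nonneg _
  have hEB : ∀ σ : Config N, |Efun N p β hβ h x g σ ω| ≤ ∑ τ, |Efun N p β hβ h x g τ ω| :=
    fun σ => Finset.single_le_sum (f := fun τ : Config N => |Efun N p β hβ h x g τ ω|)
      (fun τ _ => abs_nonneg _) (Finset.mem_univ σ)
  have hZeq := Zpart_update_eq N p β hβ h x g ω
  have hcard1 : (1:ℝ) ≤ (Fintype.card (Config N) : ℝ) := by
    exact_mod_cast (config_card_pos N)
  have hup : Zpart N (Function.update β p x) h g ω
      ≤ (Fintype.card (Config N) : ℝ) * Real.exp (∑ σ, |Efun N p β hβ h x g σ ω|) := by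
    rw [hZeq]
    calc ∑ σ, Real.exp (Efun N p β hβ h x g σ ω)
        ≤ ∑ _σ : Config N, Real.exp (∑ σ, |Efun N p β hβ h x g σ ω|) :=
          Finset.sum_le_sum fun σ _ => Real.exp_le_exp.mpr (le_trans (le_abs_self _) (hEB σ))
      _ = (Fintype.card (Config N) : ℝ) * Real.exp (∑ σ, |Efun N p β hβ h x g σ ω|) := by
          rw [Finset.sum_const, Finset.card_univ, nsmul_eq_mul]
  have hlow : Real.exp (-∑ σ, |Efun N p β hβ h x g σ ω|)
      ≤ Zpart N (Function.update β p x) h g ω := by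
    rw [hZeq]
    have h1 : Real.exp (-∑ σ, |Efun N p β hβ h x g σ ω|)
        ≤ Real.exp (Efun N p β hβ h x g (fun _ => true) ω) := by
      apply Real.exp_le_exp.mpr
      have h2 := hEB (fun _ => true)
      rw [abs_le] at h2
      linarith [h2.1]
    refine le_trans h1 ?_
    exact Finset.single_le_sum (f := fun σ : Config N => Real.exp (Efun N p β hβ h x g σ ω))
      (fun τ _ => (Real.exp_pos _).le) (Finset.mem_univ _)
  rw [abs_le]
  constructor
  · have h1 := Real.log_le_log (Real.exp_pos _) hlow
    rw [Real.log_exp] at h1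
    have h2 : (0:ℝ) ≤ Real.log (Fintype.card (Config N)) := Real.log_nonneg hcard1
    linarith
  · have h1 := Real.log_le_log (Zpart_pos N p β hβ h x g ω) hup
    rw [Real.log_mul (by linarith : (Fintype.card (Config N):ℝ) ≠ 0) (Real.exp_pos _).ne',
      Real.log_exp] at h1
    linarith

lemma integrable_log_Zpart {μ : Measure Ω} [IsFiniteMeasure μ] (N p : ℕ) (β : ℕ → ℝ)
    (hβ : (Function.support β).Finite) (h x : ℝ) (g : (q : ℕ) → (Fin q → Fin N) → Ω → ℝ)
    (hm : ∀ q i, Measurable (g q i)) (hl : ∀ q i, Measure.map (g q i) μ = gaussianReal 0 1) :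
    Integrable (fun ω => Real.log (Zpart N (Function.update β p x) h g ω)) μ := by
  have hbound : Integrable (fun ω =>
      Real.log (Fintype.card (Config N)) + ∑ σ, |Efun N p β hβ h x g σ ω|) μ :=
    (integrable_const _).add (integrable_finset_sum _
      (fun σ _ => (integrable_Efun N p β hβ h x g hm hl σ).abs))
  refine hbound.mono' (measurable_log_Zpart_update N p β hβ h x g hm).aestronglyMeasurable ?_
  refine ae_of_all _ fun ω => ?_
  rw [Real.norm_eq_abs]
  exact abs_log_Zpart_le N p β hβ h x g ω

end St10

namespace St10
variable {Ω : Type*} [MeasurableSpace Ω]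
open Real Finset MeasureTheory ProbabilityTheory

set_option maxHeartbeats 1000000 in
lemma pointwise_bound (N p : ℕ) (β : ℕ → ℝ) (hβ : (Function.support β).Finite) (h : ℝ)
    (g : (q : ℕ) → (Fin q → Fin N) → Ω → ℝ) {b γ : ℝ} (hγ : 0 < γ) (hxb : β p < b) (ω : Ω) :
    0 ≤ (Real.log (Zpart N (Function.update β p (b + γ)) h g ω)
          - Real.log (Zpart N (Function.update β p b) h g ω)) / γ
        - (Real.log (Zpart N (Function.update β p (β p)) h g ω)
          - Real.log (Zpart N (Function.update β p (β p - γ)) h g ω)) / γ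
    ∧ ∑ σ, |Hp N p (g p) σ ω - ∑ τ, Hp N p (g p) τ ω * gibbs N (Function.update β p (β p)) h g τ ω|
          * gibbs N (Function.update β p (β p)) h g σ ω
      ≤ 2 * ((Real.log (Zpart N (Function.update β p (b + γ)) h g ω)
            - Real.log (Zpart N (Function.update β p b) h g ω)) / γ
          - (Real.log (Zpart N (Function.update β p (β p)) h g ω)
            - Real.log (Zpart N (Function.update β p (β p - γ)) h g ω)) / γ)
        + 2 * Real.log 2 / (b + γ - β p) := by
  have key := gibbs_key (fun σ : Config N => Hp N p (g p) σ ω)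
    (fun σ : Config N => Arest N p β h g hβ.toFinset σ ω) hγ hxb
  have key1 : (Real.log (∑ σ, Real.exp (Hp N p (g p) σ ω * β p + Arest N p β h g hβ.toFinset σ ω))
        - Real.log (∑ σ, Real.exp (Hp N p (g p) σ ω * (β p - γ) + Arest N p β h g hβ.toFinset σ ω))) / γ
      ≤ (Real.log (∑ σ, Real.exp (Hp N p (g p) σ ω * (b + γ) + Arest N p β h g hβ.toFinset σ ω))
        - Real.log (∑ σ, Real.exp (Hp N p (g p) σ ω * b + Arest N p β h g hβ.toFinset σ ω))) / γ := key.1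
  have key2 : ∑ σ, Real.exp (Hp N p (g p) σ ω * β p + Arest N p β h g hβ.toFinset σ ω)
        / (∑ τ, Real.exp (Hp N p (g p) τ ω * β p + Arest N p β h g hβ.toFinset τ ω))
        * |Hp N p (g p) σ ω - ∑ τ, Real.exp (Hp N p (g p) τ ω * β p + Arest N p β h g hβ.toFinset τ ω)
            / (∑ κ, Real.exp (Hp N p (g p) κ ω * β p + Arest N p β h g hβ.toFinset κ ω)) * Hp N p (g p) τ ω|
      ≤ 2 * ((Real.log (∑ σ, Real.exp (Hp N p (g p) σ ω * (b + γ) + Arest N p β h g hβ.toFinset σ ω))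
            - Real.log (∑ σ, Real.exp (Hp N p (g p) σ ω * b + Arest N p β h g hβ.toFinset σ ω))) / γ
          - (Real.log (∑ σ, Real.exp (Hp N p (g p) σ ω * β p + Arest N p β h g hβ.toFinset σ ω))
            - Real.log (∑ σ, Real.exp (Hp N p (g p) σ ω * (β p - γ) + Arest N p β h g hβ.toFinset σ ω))) / γ)
        + 2 * Real.log 2 / (b + γ - β p) := key.2
  have hZe : ∀ t : ℝ, Real.log (Zpart N (Function.update β p t) h g ω)
      = Real.log (∑ σ, Real.exp (Hp N p (g p) σ ω * t + Arest N p β h g hβ.toFinset σ ω)) := by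
    intro t; rw [Zpart_update_eq' N p β hβ h t g ω]
  have hge : ∀ σ, gibbs N (Function.update β p (β p)) h g σ ω
      = Real.exp (Hp N p (g p) σ ω * β p + Arest N p β h g hβ.toFinset σ ω)
        / ∑ τ, Real.exp (Hp N p (g p) τ ω * β p + Arest N p β h g hβ.toFinset τ ω) := by
    intro σ
    unfold gibbs
    rw [weight_update_eq N p β hβ h (β p) g σ ω, Zpart_update_eq' N p β hβ h (β p) g ω]
  constructor
  · rw [hZe, hZe, hZe, hZe]
    linarith [key1]
  · rw [hZe, hZe, hZe, hZe]
    have hsum : (∑ τ, Hp N p (g p) τ ω * gibbs N (Function.update β p (β p)) h g τ ω)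
        = ∑ τ, Real.exp (Hp N p (g p) τ ω * β p + Arest N p β h g hβ.toFinset τ ω)
            / (∑ κ, Real.exp (Hp N p (g p) κ ω * β p + Arest N p β h g hβ.toFinset κ ω))
            * Hp N p (g p) τ ω :=
      Finset.sum_congr rfl fun τ _ => by rw [hge τ, mul_comm]
    rw [hsum]
    refine le_trans (le_of_eq ?_) key2
    refine Finset.sum_congr rfl fun σ _ => ?_
    rw [hge σ, mul_comm]

end St10

open St10 in
set_option maxHeartbeats 2000000 in
/-- If for `x ∈ {β_p − γ, β_p, β_p', β_p' + γ}` the free energy `F_N(x)`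
of the model with coefficient `x` replacing `β_p` converges to `P(x)`, then
`limsup_N N⁻¹ E⟨|H_p(σ) − ⟨H_p(σ)⟩|⟩ ≤ 8((P(β_p'+γ) − P(β_p'))/γ − (P(β_p) − P(β_p−γ))/γ)`. -/
theorem statement10 {Ω : Type*} [MeasurableSpace Ω] (μ : Measure Ω) [IsProbabilityMeasure μ]
    (p : ℕ) (hp : 1 ≤ p) (β : ℕ → ℝ) (hβ : (Function.support β).Finite) (h : ℝ)
    (g : (N : ℕ) → (q : ℕ) → (Fin q → Fin N) → Ω → ℝ)
    (hg : ∀ N, IsGaussianDisorder N (g N) μ)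
    (βp' γ : ℝ) (hβp' : β p < βp') (hγ : 0 < γ)
    (P : ℝ → ℝ)
    (hP : ∀ x ∈ ({β p - γ, β p, βp', βp' + γ} : Set ℝ),
      Tendsto (fun N => ∫ ω, psiFE N (Function.update β p x) h (g N) ω ∂μ)
        atTop (nhds (P x))) :
    Filter.limsup (fun N : ℕ => (N : ℝ)⁻¹ * ∫ ω, gibbsAvg N β h (g N) 1
        (fun σs ω' => |Hp N p (g N p) (σs 0) ω' -
          gibbsAvg N β h (g N) 1 (fun τs ω'' => Hp N p (g N p) (τs 0) ω'') ω'|) ω ∂μ)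
      atTop ≤ 8 * ((P (βp' + γ) - P βp') / γ - (P (β p) - P (β p - γ)) / γ) := by
  classical
  have hgm : ∀ N q i, Measurable (g N q i) := fun N => (hg N).1
  have hgl : ∀ N q i, Measure.map (g N q i) μ = gaussianReal 0 1 := fun N => (hg N).2.1
  have hupdate : Function.update β p (β p) = β := Function.update_eq_self p β
  set u : ℕ → ℝ := fun N : ℕ => (N : ℝ)⁻¹ * ∫ ω, gibbsAvg N β h (g N) 1
      (fun σs ω' => |Hp N p (g N p) (σs 0) ω' -
        gibbsAvg N β h (g N) 1 (fun τs ω'' => Hp N p (g N p) (τs 0) ω'') ω'|) ω ∂μ with hudef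
  set s : ℝ := βp' + γ - β p with hsdef
  have hs : 0 < s := by simp only [hsdef]; linarith
  set Fn : ℕ → ℝ → ℝ := fun N t => ∫ ω, psiFE N (Function.update β p t) h (g N) ω ∂μ with hFdef
  set IL : ℕ → ℝ → ℝ := fun N t =>
    ∫ ω, Real.log (Zpart N (Function.update β p t) h (g N) ω) ∂μ with hILdef
  have hFIL : ∀ N t, Fn N t = (N:ℝ)⁻¹ * IL N t := by
    intro N t
    simp only [hFdef, hILdef, psiFE]
    exact integral_const_mul _ _
  set d : ℕ → ℝ := fun N =>
    (Fn N (βp' + γ) - Fn N βp') / γ - (Fn N (β p) - Fn N (β p - γ)) / γ with hddef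
  have hTrw : ∀ N : ℕ, (fun ω => gibbsAvg N β h (g N) 1
      (fun σs ω' => |Hp N p (g N p) (σs 0) ω' -
        gibbsAvg N β h (g N) 1 (fun τs ω'' => Hp N p (g N p) (τs 0) ω'') ω'|) ω)
      = fun ω => ∑ σ, |Hp N p (g N p) σ ω -
          ∑ τ, Hp N p (g N p) τ ω * gibbs N (Function.update β p (β p)) h (g N) τ ω|
          * gibbs N (Function.update β p (β p)) h (g N) σ ω := by
    intro N
    funext ω
    rw [hupdate]
    have hM : gibbsAvg N β h (g N) 1 (fun τs ω'' => Hp N p (g N p) (τs 0) ω'') ω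
        = ∑ τ, Hp N p (g N p) τ ω * gibbs N β h (g N) τ ω :=
      gibbsAvg_one N β h (g N) (fun τ ω'' => Hp N p (g N p) τ ω'') ω
    have h1 : gibbsAvg N β h (g N) 1
        (fun σs ω' => |Hp N p (g N p) (σs 0) ω' -
          gibbsAvg N β h (g N) 1 (fun τs ω'' => Hp N p (g N p) (τs 0) ω'') ω'|) ω
        = ∑ σ, |Hp N p (g N p) σ ω -
            gibbsAvg N β h (g N) 1 (fun τs ω'' => Hp N p (g N p) (τs 0) ω'') ω|
            * gibbs N β h (g N) σ ω :=
      gibbsAvg_one N β h (g N) (fun σ ω' => |Hp N p (g N p) σ ω' -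
        gibbsAvg N β h (g N) 1 (fun τs ω'' => Hp N p (g N p) (τs 0) ω'') ω'|) ω
    rw [h1, hM]
  have hLint : ∀ (N : ℕ) (t : ℝ),
      Integrable (fun ω => Real.log (Zpart N (Function.update β p t) h (g N) ω)) μ :=
    fun N t => integrable_log_Zpart N p β hβ h t (g N) (hgm N) (hgl N)
  have hgnn : ∀ (N : ℕ) (σ : Config N) (ω : Ω),
      0 ≤ gibbs N (Function.update β p (β p)) h (g N) σ ω := by
    intro N σ ω
    unfold gibbs weight
    exact div_nonneg (Real.exp_pos _).le (Zpart_pos N p β hβ h (β p) (g N) ω).le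
  have main_N : ∀ N : ℕ,
      (∫ ω, (∑ σ, |Hp N p (g N p) σ ω -
          ∑ τ, Hp N p (g N p) τ ω * gibbs N (Function.update β p (β p)) h (g N) τ ω|
          * gibbs N (Function.update β p (β p)) h (g N) σ ω) ∂μ)
        ≤ 2 * ((IL N (βp' + γ) - IL N βp') / γ - (IL N (β p) - IL N (β p - γ)) / γ)
          + 2 * Real.log 2 / s
      ∧ 0 ≤ (IL N (βp' + γ) - IL N βp') / γ - (IL N (β p) - IL N (β p - γ)) / γ := by
    intro N
    have hpt := fun ω : Ω => pointwise_bound N p β hβ h (g N) hγ hβp' ω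
    have hQint : Integrable (fun ω =>
        (Real.log (Zpart N (Function.update β p (βp' + γ)) h (g N) ω)
          - Real.log (Zpart N (Function.update β p βp') h (g N) ω)) / γ
        - (Real.log (Zpart N (Function.update β p (β p)) h (g N) ω)
          - Real.log (Zpart N (Function.update β p (β p - γ)) h (g N) ω)) / γ) μ :=
      (((hLint N (βp' + γ)).sub (hLint N βp')).div_const γ).sub
        (((hLint N (β p)).sub (hLint N (β p - γ))).div_const γ)
    have hQeq : (∫ ω, ((Real.log (Zpart N (Function.update β p (βp' + γ)) h (g N) ω)
          - Real.log (Zpart N (Function.update β p βp') h (g N) ω)) / γ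
        - (Real.log (Zpart N (Function.update β p (β p)) h (g N) ω)
          - Real.log (Zpart N (Function.update β p (β p - γ)) h (g N) ω)) / γ) ∂μ)
        = (IL N (βp' + γ) - IL N βp') / γ - (IL N (β p) - IL N (β p - γ)) / γ := by
      have i1 : Integrable (fun ω => (Real.log (Zpart N (Function.update β p (βp' + γ)) h (g N) ω)
          - Real.log (Zpart N (Function.update β p βp') h (g N) ω)) / γ) μ := by
        exact ((hLint N (βp' + γ)).sub (hLint N βp')).div_const γ
      have i2 : Integrable (fun ω => (Real.log (Zpart N (Function.update β p (β p)) h (g N) ω)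
          - Real.log (Zpart N (Function.update β p (β p - γ)) h (g N) ω)) / γ) μ := by
        exact ((hLint N (β p)).sub (hLint N (β p - γ))).div_const γ
      have i3 : Integrable (fun ω => Real.log (Zpart N (Function.update β p (βp' + γ)) h (g N) ω)
          - Real.log (Zpart N (Function.update β p βp') h (g N) ω)) μ := by
        exact (hLint N (βp' + γ)).sub (hLint N βp')
      have i4 : Integrable (fun ω => Real.log (Zpart N (Function.update β p (β p)) h (g N) ω)
          - Real.log (Zpart N (Function.update β p (β p - γ)) h (g N) ω)) μ := by
        exact (hLint N (β p)).sub (hLint N (β p - γ))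
      rw [integral_sub i1 i2, integral_div, integral_div,
        integral_sub (hLint N (βp' + γ)) (hLint N βp'),
        integral_sub (hLint N (β p)) (hLint N (β p - γ))]
    have hbint : Integrable (fun ω =>
        2 * ((Real.log (Zpart N (Function.update β p (βp' + γ)) h (g N) ω)
          - Real.log (Zpart N (Function.update β p βp') h (g N) ω)) / γ
        - (Real.log (Zpart N (Function.update β p (β p)) h (g N) ω)
          - Real.log (Zpart N (Function.update β p (β p - γ)) h (g N) ω)) / γ)
        + 2 * Real.log 2 / s) μ :=
      (hQint.const_mul 2).add (integrable_const _)
    have hTnn : ∀ ω, 0 ≤ ∑ σ, |Hp N p (g N p) σ ω -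
        ∑ τ, Hp N p (g N p) τ ω * gibbs N (Function.update β p (β p)) h (g N) τ ω|
        * gibbs N (Function.update β p (β p)) h (g N) σ ω :=
      fun ω => Finset.sum_nonneg fun σ _ => mul_nonneg (abs_nonneg _) (hgnn N σ ω)
    have hTmeas : Measurable (fun ω => ∑ σ, |Hp N p (g N p) σ ω -
        ∑ τ, Hp N p (g N p) τ ω * gibbs N (Function.update β p (β p)) h (g N) τ ω|
        * gibbs N (Function.update β p (β p)) h (g N) σ ω) := by
      refine Finset.measurable_sum _ fun σ _ => Measurable.mul ?_
        (measurable_gibbs_update N p β hβ h (β p) (g N) (hgm N) σ)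
      refine Measurable.abs (Measurable.sub (measurable_Hp N p (g N p) (hgm N p) σ) ?_)
      exact Finset.measurable_sum _ fun τ _ =>
        (measurable_Hp N p (g N p) (hgm N p) τ).mul
          (measurable_gibbs_update N p β hβ h (β p) (g N) (hgm N) τ)
    have hsb : ∀ ω, (∑ σ, |Hp N p (g N p) σ ω -
        ∑ τ, Hp N p (g N p) τ ω * gibbs N (Function.update β p (β p)) h (g N) τ ω|
        * gibbs N (Function.update β p (β p)) h (g N) σ ω)
        ≤ 2 * ((Real.log (Zpart N (Function.update β p (βp' + γ)) h (g N) ω)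
          - Real.log (Zpart N (Function.update β p βp') h (g N) ω)) / γ
        - (Real.log (Zpart N (Function.update β p (β p)) h (g N) ω)
          - Real.log (Zpart N (Function.update β p (β p - γ)) h (g N) ω)) / γ)
        + 2 * Real.log 2 / s := by
      intro ω
      have h2 := (hpt ω).2
      rw [hsdef]
      exact h2
    have hTint : Integrable (fun ω => ∑ σ, |Hp N p (g N p) σ ω -
        ∑ τ, Hp N p (g N p) τ ω * gibbs N (Function.update β p (β p)) h (g N) τ ω|
        * gibbs N (Function.update β p (β p)) h (g N) σ ω) μ := by
      refine hbint.mono' hTmeas.aestronglyMeasurable (ae_of_all _ fun ω => ?_)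
      rw [Real.norm_eq_abs, abs_of_nonneg (hTnn ω)]
      exact hsb ω
    constructor
    · calc (∫ ω, (∑ σ, |Hp N p (g N p) σ ω -
            ∑ τ, Hp N p (g N p) τ ω * gibbs N (Function.update β p (β p)) h (g N) τ ω|
            * gibbs N (Function.update β p (β p)) h (g N) σ ω) ∂μ)
          ≤ ∫ ω, (2 * ((Real.log (Zpart N (Function.update β p (βp' + γ)) h (g N) ω)
              - Real.log (Zpart N (Function.update β p βp') h (g N) ω)) / γ
            - (Real.log (Zpart N (Function.update β p (β p)) h (g N) ω)
              - Real.log (Zpart N (Function.update β p (β p - γ)) h (g N) ω)) / γ)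
            + 2 * Real.log 2 / s) ∂μ := integral_mono hTint hbint hsb
        _ = 2 * ((IL N (βp' + γ) - IL N βp') / γ - (IL N (β p) - IL N (β p - γ)) / γ)
            + 2 * Real.log 2 / s := by
            have hb1 : Integrable (fun ω =>
                2 * ((Real.log (Zpart N (Function.update β p (βp' + γ)) h (g N) ω)
                  - Real.log (Zpart N (Function.update β p βp') h (g N) ω)) / γ
                - (Real.log (Zpart N (Function.update β p (β p)) h (g N) ω)
                  - Real.log (Zpart N (Function.update β p (β p - γ)) h (g N) ω)) / γ)) μ := by
              exact hQint.const_mul 2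
            rw [integral_add hb1 (integrable_const _),
              integral_const_mul, hQeq, integral_const, probReal_univ,
              smul_eq_mul, one_mul]
    · rw [← hQeq]
      exact integral_nonneg fun ω => (hpt ω).1
  have unonneg : ∀ N, 0 ≤ u N := by
    intro N
    simp only [hudef]
    rw [hTrw N]
    refine mul_nonneg (by positivity) (integral_nonneg fun ω => ?_)
    exact Finset.sum_nonneg fun σ _ => mul_nonneg (abs_nonneg _) (hgnn N σ ω)
  have hule : ∀ N : ℕ, u N ≤ 2 * d N + (N:ℝ)⁻¹ * (2 * Real.log 2 / s) := by
    intro N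
    simp only [hudef]
    rw [hTrw N]
    refine le_trans (mul_le_mul_of_nonneg_left (main_N N).1
      (by positivity : (0:ℝ) ≤ (N:ℝ)⁻¹)) (le_of_eq ?_)
    simp only [hddef, hFIL]
    ring
  have hd0 : ∀ N, 0 ≤ d N := by
    intro N
    have h2 := (main_N N).2
    have heq : d N = (N:ℝ)⁻¹ *
        ((IL N (βp' + γ) - IL N βp') / γ - (IL N (β p) - IL N (β p - γ)) / γ) := by
      simp only [hddef, hFIL]
      ring
    rw [heq]
    exact mul_nonneg (by positivity) h2
  have m1 : βp' + γ ∈ ({β p - γ, β p, βp', βp' + γ} : Set ℝ) := by simp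
  have m2 : βp' ∈ ({β p - γ, β p, βp', βp' + γ} : Set ℝ) := by simp
  have m3 : β p ∈ ({β p - γ, β p, βp', βp' + γ} : Set ℝ) := by simp
  have m4 : β p - γ ∈ ({β p - γ, β p, βp', βp' + γ} : Set ℝ) := by simp
  have hdlim : Tendsto d atTop
      (nhds ((P (βp' + γ) - P βp') / γ - (P (β p) - P (β p - γ)) / γ)) :=
    (((hP _ m1).sub (hP _ m2)).div_const γ).sub (((hP _ m3).sub (hP _ m4)).div_const γ)
  have hblim : Tendsto (fun N : ℕ => 2 * d N + (N:ℝ)⁻¹ * (2 * Real.log 2 / s)) atTop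
      (nhds (2 * ((P (βp' + γ) - P βp') / γ - (P (β p) - P (β p - γ)) / γ))) := by
    have h2 : Tendsto (fun N : ℕ => (N:ℝ)⁻¹ * (2 * Real.log 2 / s)) atTop (nhds 0) := by
      simpa using tendsto_inv_atTop_nhds_zero_nat.mul_const (2 * Real.log 2 / s)
    have h3 := (hdlim.const_mul 2).add h2
    simpa using h3
  have hD0 : 0 ≤ (P (βp' + γ) - P βp') / γ - (P (β p) - P (β p - γ)) / γ :=
    ge_of_tendsto' hdlim hd0
  calc Filter.limsup u atTop
      ≤ Filter.limsup (fun N : ℕ => 2 * d N + (N:ℝ)⁻¹ * (2 * Real.log 2 / s)) atTop := by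
        refine Filter.limsup_le_limsup (Filter.Eventually.of_forall hule) ?_ ?_
        · exact Filter.isCoboundedUnder_le_of_le atTop unonneg
        · exact hblim.isBoundedUnder_le
    _ = 2 * ((P (βp' + γ) - P βp') / γ - (P (β p) - P (β p - γ)) / γ) := hblim.limsup_eq
    _ ≤ 8 * ((P (βp' + γ) - P βp') / γ - (P (β p) - P (β p - γ)) / γ) := by nlinarith [hD0]
end
end

section
/- Fix an integer p ≥ 1, real parameters (β_q)_{q≥1} with only finitely many nonzero, and h ∈ ℝ. Suppose that: (i) for every x in some open neighborhood of β_p, lim_{N→∞} E|ψ_N(x) − F_N(x)| = 0, where ψ_N(x) and F_N(x) are the random and averaged free energies of the mixed model in which the coefficient β_p of H_p is replaced by x; (ii) for every x in that neighborhood, F_N(x) converges as N → ∞ to a limit P(x); and (iii) P is differentiable at β_p. Then lim_{N→∞} N^{−1} E|⟨H_p(σ)⟩_{β_p} − E⟨H_p(σ)⟩_{β_p}| = 0. -/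
open MeasureTheory ProbabilityTheory Filter

open Real

noncomputable section
set_option linter.unusedSectionVars false
set_option linter.unusedVariables false


section LSE
variable {S : Type*} [Fintype S] [Nonempty S] (a b : S → ℝ)

def Zls (x : ℝ) : ℝ := ∑ σ : S, Real.exp (x * a σ + b σ)
def Nls (x : ℝ) : ℝ := ∑ σ : S, a σ * Real.exp (x * a σ + b σ)
def N2ls (x : ℝ) : ℝ := ∑ σ : S, (a σ)^2 * Real.exp (x * a σ + b σ)
def Dls (x : ℝ) : ℝ := Nls a b x / Zls a b x

lemma Zls_pos (x : ℝ) : 0 < Zls a b x :=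
  Finset.sum_pos (fun σ _ => Real.exp_pos _) Finset.univ_nonempty

lemma hasDerivAt_exp_affine (c d x : ℝ) :
    HasDerivAt (fun y => Real.exp (y * c + d)) (c * Real.exp (x * c + d)) x := by
  have h : HasDerivAt (fun y : ℝ => y * c + d) c x :=
    (hasDerivAt_mul_const c).add_const d
  simpa [mul_comm] using h.exp

lemma hasDerivAt_Zls (x : ℝ) : HasDerivAt (Zls a b) (Nls a b x) x := by
  have := HasDerivAt.fun_sum (fun σ (_ : σ ∈ (Finset.univ : Finset S)) =>
    hasDerivAt_exp_affine (a σ) (b σ) x)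
  rw [show Zls a b = fun y => ∑ σ : S, Real.exp (y * a σ + b σ) from rfl]
  simpa [Zls, Nls, mul_comm] using this

lemma hasDerivAt_Nls (x : ℝ) : HasDerivAt (Nls a b) (N2ls a b x) x := by
  have := HasDerivAt.fun_sum (fun σ (_ : σ ∈ (Finset.univ : Finset S)) =>
    ((hasDerivAt_exp_affine (a σ) (b σ) x).const_mul (a σ)))
  rw [show Nls a b = fun y => ∑ σ : S, a σ * Real.exp (y * a σ + b σ) from rfl]
  simpa [Nls, N2ls, sq, mul_comm, mul_left_comm, mul_assoc] using this

lemma hasDerivAt_log_Zls (x : ℝ) :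
    HasDerivAt (fun y => Real.log (Zls a b y)) (Dls a b x) x :=
  (hasDerivAt_Zls a b x).log (Zls_pos a b x).ne'

lemma hasDerivAt_Dls (x : ℝ) :
    HasDerivAt (Dls a b)
      ((N2ls a b x * Zls a b x - Nls a b x * Nls a b x) / (Zls a b x)^2) x :=
  (hasDerivAt_Nls a b x).div (hasDerivAt_Zls a b x) (Zls_pos a b x).ne'

lemma Dls_deriv_nonneg (x : ℝ) :
    0 ≤ (N2ls a b x * Zls a b x - Nls a b x * Nls a b x) / (Zls a b x)^2 := by
  apply div_nonneg _ (sq_nonneg _)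
  rw [sub_nonneg, ← sq]
  have key := Finset.sum_mul_sq_le_sq_mul_sq Finset.univ
    (fun σ : S => a σ * Real.sqrt (Real.exp (x * a σ + b σ)))
    (fun σ : S => Real.sqrt (Real.exp (x * a σ + b σ)))
  have h1 : ∀ σ : S, a σ * Real.sqrt (Real.exp (x * a σ + b σ)) *
      Real.sqrt (Real.exp (x * a σ + b σ)) = a σ * Real.exp (x * a σ + b σ) := by
    intro σ
    rw [mul_assoc, Real.mul_self_sqrt (Real.exp_pos _).le]
  have h2 : ∀ σ : S, (a σ * Real.sqrt (Real.exp (x * a σ + b σ)))^2 =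
      (a σ)^2 * Real.exp (x * a σ + b σ) := by
    intro σ
    rw [mul_pow, Real.sq_sqrt (Real.exp_pos _).le]
  have h3 : ∀ σ : S, (Real.sqrt (Real.exp (x * a σ + b σ)))^2 =
      Real.exp (x * a σ + b σ) := fun σ => Real.sq_sqrt (Real.exp_pos _).le
  simp only [h1, h2, h3] at key
  simpa [Nls, N2ls, Zls, mul_comm] using key

lemma monotone_Dls : Monotone (Dls a b) := by
  have hd : ∀ x, HasDerivAt (Dls a b)
      ((N2ls a b x * Zls a b x - Nls a b x * Nls a b x) / (Zls a b x)^2) x :=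
    hasDerivAt_Dls a b
  apply monotone_of_deriv_nonneg
  · exact fun x => (hd x).differentiableAt
  · intro x
    rw [(hd x).deriv]
    exact Dls_deriv_nonneg a b x

lemma Dls_le_slope {x δ : ℝ} (hδ : 0 < δ) :
    Dls a b x ≤ (Real.log (Zls a b (x + δ)) - Real.log (Zls a b x)) / δ := by
  obtain ⟨c, hc, hceq⟩ := exists_hasDerivAt_eq_slope (fun y => Real.log (Zls a b y))
    (Dls a b) (by linarith : x < x + δ)
    (fun y _ => (hasDerivAt_log_Zls a b y).continuousAt.continuousWithinAt)
    (fun y _ => hasDerivAt_log_Zls a b y)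
  have : Dls a b x ≤ Dls a b c := monotone_Dls a b hc.1.le
  rw [hceq] at this
  simpa using this

lemma slope_le_Dls {x δ : ℝ} (hδ : 0 < δ) :
    (Real.log (Zls a b x) - Real.log (Zls a b (x - δ))) / δ ≤ Dls a b x := by
  obtain ⟨c, hc, hceq⟩ := exists_hasDerivAt_eq_slope (fun y => Real.log (Zls a b y))
    (Dls a b) (by linarith : x - δ < x)
    (fun y _ => (hasDerivAt_log_Zls a b y).continuousAt.continuousWithinAt)
    (fun y _ => hasDerivAt_log_Zls a b y)
  have : Dls a b c ≤ Dls a b x := monotone_Dls a b hc.2.le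
  rw [hceq] at this
  have heq : x - (x - δ) = δ := by ring
  rwa [heq] at this

lemma abs_Dls_le {K : ℝ} (hK : ∀ σ : S, |a σ| ≤ K) (x : ℝ) : |Dls a b x| ≤ K := by
  have hZ := Zls_pos a b x
  rw [Dls, abs_div, abs_of_pos hZ, div_le_iff₀ hZ]
  calc |Nls a b x| ≤ ∑ σ : S, |a σ * Real.exp (x * a σ + b σ)| :=
        Finset.abs_sum_le_sum_abs _ _
    _ ≤ ∑ σ : S, K * Real.exp (x * a σ + b σ) := by
        apply Finset.sum_le_sum
        intro σ _
        rw [abs_mul, abs_of_pos (Real.exp_pos _)]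
        exact mul_le_mul_of_nonneg_right (hK σ) (Real.exp_pos _).le
    _ = K * Zls a b x := by rw [Zls, Finset.mul_sum]

lemma abs_log_Zls_le {M : ℝ} (hM : ∀ σ : S, |x * a σ + b σ| ≤ M) :
    |Real.log (Zls a b x)| ≤ Real.log (Fintype.card S) + M := by
  have hZ := Zls_pos a b x
  have hcard : (1 : ℝ) ≤ Fintype.card S := by
    exact_mod_cast Fintype.card_pos
  have hlogcard : (0:ℝ) ≤ Real.log (Fintype.card S) := Real.log_nonneg hcard
  rw [abs_le]
  constructor
  · obtain ⟨σ₀⟩ := (inferInstance : Nonempty S)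
    have h1 : Real.exp (-M) ≤ Zls a b x := by
      calc Real.exp (-M) ≤ Real.exp (x * a σ₀ + b σ₀) := by
            apply Real.exp_le_exp.2
            have := hM σ₀
            rw [abs_le] at this
            linarith [this.1]
        _ ≤ Zls a b x :=
            Finset.single_le_sum (f := fun σ : S => Real.exp (x * a σ + b σ))
              (fun σ _ => (Real.exp_pos _).le) (Finset.mem_univ σ₀)
    have := Real.log_le_log (Real.exp_pos _) h1
    rw [Real.log_exp] at this
    linarith
  · have h2 : Zls a b x ≤ (Fintype.card S : ℝ) * Real.exp M := by
      calc Zls a b x ≤ ∑ _σ : S, Real.exp M :=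
            Finset.sum_le_sum (fun σ _ => Real.exp_le_exp.2 (abs_le.1 (hM σ)).2)
        _ = (Fintype.card S : ℝ) * Real.exp M := by
            rw [Finset.sum_const, nsmul_eq_mul, Finset.card_univ]
    have := Real.log_le_log hZ h2
    rwa [Real.log_mul (by positivity) (Real.exp_pos _).ne', Real.log_exp] at this

end LSE

variable {Ω : Type*} [MeasurableSpace Ω]

section Bridge
variable (N p : ℕ) (β : ℕ → ℝ) (h : ℝ) (g : (q : ℕ) → (Fin q → Fin N) → Ω → ℝ)

/-- The `H_p` part coefficient function. -/
def aF (ω : Ω) : Config N → ℝ := fun σ => Hp N p (g p) σ ω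

/-- The rest of the exponent. -/
def bF (ω : Ω) : Config N → ℝ := fun σ =>
  (∑ᶠ q, (if q = p then 0 else β q) * Hp N q (g q) σ ω) + h * ∑ i, spin (σ i)

lemma exponent_split (hβ : (Function.support β).Finite) (x : ℝ) (σ : Config N) (ω : Ω) :
    (∑ᶠ q, Function.update β p x q * Hp N q (g q) σ ω) + h * ∑ i, spin (σ i)
      = x * aF N p g ω σ + bF N p β h g ω σ := by
  have hsplit : ∑ᶠ q, Function.update β p x q * Hp N q (g q) σ ω
      = ∑ᶠ q, ((if q = p then x * Hp N p (g p) σ ω else 0)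
        + (if q = p then 0 else β q) * Hp N q (g q) σ ω) := by
    apply finsum_congr
    intro q
    by_cases hq : q = p
    · subst hq; simp [Function.update_self]
    · simp [hq, Function.update_of_ne hq]
  have h1 : (Function.support fun q => (if q = p then x * Hp N p (g p) σ ω else 0)).Finite := by
    apply Set.Finite.subset (Set.finite_singleton p)
    intro q hq
    by_contra hqp
    simp only [Set.mem_singleton_iff] at hqp
    simp [Function.mem_support, hqp] at hq
  have h2 : (Function.support fun q => (if q = p then 0 else β q) * Hp N q (g q) σ ω).Finite := by
    apply hβ.subset
    intro q hq
    simp only [Function.mem_support] at hq ⊢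
    intro hb
    apply hq
    by_cases hqp : q = p <;> simp [hqp, hb]
  rw [hsplit, finsum_add_distrib h1 h2]

  have h3 : ∑ᶠ q, (if q = p then x * Hp N p (g p) σ ω else 0) = x * Hp N p (g p) σ ω := by
    rw [finsum_eq_single _ p]
    · simp
    · intro q hq; simp [hq]
  rw [h3, aF, bF]
  ring

lemma weight_eq (hβ : (Function.support β).Finite) (x : ℝ) (σ : Config N) (ω : Ω) :
    weight N (Function.update β p x) h g σ ω
      = Real.exp (x * aF N p g ω σ + bF N p β h g ω σ) := by
  rw [weight, exponent_split N p β h g hβ x σ ω]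

lemma Zpart_eq (hβ : (Function.support β).Finite) (x : ℝ) (ω : Ω) :
    Zpart N (Function.update β p x) h g ω = Zls (aF N p g ω) (bF N p β h g ω) x := by
  rw [Zpart, Zls]
  exact Finset.sum_congr rfl fun σ _ => weight_eq N p β h g hβ x σ ω

lemma psiFE_eq (hβ : (Function.support β).Finite) (x : ℝ) (ω : Ω) :
    psiFE N (Function.update β p x) h g ω
      = (N : ℝ)⁻¹ * Real.log (Zls (aF N p g ω) (bF N p β h g ω) x) := by
  rw [psiFE, Zpart_eq N p β h g hβ x ω]

lemma gibbsAvg_eq (hβ : (Function.support β).Finite) (ω : Ω) :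
    gibbsAvg N β h g 1 (fun σs ω' => Hp N p (g p) (σs 0) ω') ω
      = Dls (aF N p g ω) (bF N p β h g ω) (β p) := by
  have hupd : Function.update β p (β p) = β := Function.update_eq_self p β
  have hw : ∀ σ : Config N, weight N β h g σ ω
      = Real.exp (β p * aF N p g ω σ + bF N p β h g ω σ) := by
    intro σ
    conv_lhs => rw [← hupd]
    exact weight_eq N p β h g hβ (β p) σ ω
  have hZ : Zpart N β h g ω = Zls (aF N p g ω) (bF N p β h g ω) (β p) := by
    conv_lhs => rw [← hupd]
    exact Zpart_eq N p β h g hβ (β p) ω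
  rw [gibbsAvg]
  rw [← Equiv.sum_comp (Equiv.funUnique (Fin 1) (Config N)).symm
    (fun σs : Fin 1 → Config N => Hp N p (g p) (σs 0) ω * ∏ l, gibbs N β h g (σs l) ω)]
  simp only [Equiv.funUnique_symm_apply, Fin.prod_univ_one, Function.const_apply, uniqueElim_const]
  rw [Dls, Nls, Finset.sum_div]
  apply Finset.sum_congr rfl
  intro σ _
  rw [gibbs, hw σ, hZ, mul_div_assoc, aF]

end Bridge


lemma integrable_id_gaussianReal : Integrable (fun x : ℝ => x) (gaussianReal 0 1) := by
  rw [gaussianReal_of_var_ne_zero 0 one_ne_zero]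
  rw [integrable_withDensity_iff (measurable_gaussianPDF 0 1)
    (Filter.Eventually.of_forall fun x => ENNReal.ofReal_lt_top)]
  have : (fun x : ℝ => x * (gaussianPDF 0 1 x).toReal)
      = fun x : ℝ => (√(2 * π))⁻¹ * (x * rexp (-(1/2) * x ^ 2)) := by
    funext x
    rw [gaussianPDF, ENNReal.toReal_ofReal (gaussianPDFReal_nonneg 0 1 x), gaussianPDFReal]
    push_cast
    ring_nf
  rw [this]
  exact (integrable_mul_exp_neg_mul_sq (by norm_num : (0:ℝ) < 1/2)).const_mul _

section Model
variable {Ω : Type*} [MeasurableSpace Ω]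

/-- Pointwise bound for `Hp`. -/
def Kb (N q : ℕ) (g : (Fin q → Fin N) → Ω → ℝ) (ω : Ω) : ℝ :=
  (N : ℝ) ^ (-(((q : ℝ) - 1) / 2)) * ∑ i : Fin q → Fin N, |g i ω|

lemma Kb_nonneg (N q : ℕ) (g : (Fin q → Fin N) → Ω → ℝ) (ω : Ω) : 0 ≤ Kb N q g ω :=
  mul_nonneg (Real.rpow_nonneg (Nat.cast_nonneg N) _)
    (Finset.sum_nonneg fun i _ => abs_nonneg _)

lemma abs_spin (c : Bool) : |spin c| = 1 := by cases c <;> simp [spin]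

lemma abs_Hp_le (N q : ℕ) (g : (Fin q → Fin N) → Ω → ℝ) (σ : Config N) (ω : Ω) :
    |Hp N q g σ ω| ≤ Kb N q g ω := by
  rw [Hp, Kb, abs_mul, abs_of_nonneg (Real.rpow_nonneg (Nat.cast_nonneg N) _)]
  apply mul_le_mul_of_nonneg_left _ (Real.rpow_nonneg (Nat.cast_nonneg N) _)
  calc |∑ i : Fin q → Fin N, g i ω * ∏ k, spin (σ (i k))|
      ≤ ∑ i : Fin q → Fin N, |g i ω * ∏ k, spin (σ (i k))| := Finset.abs_sum_le_sum_abs _ _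
    _ = ∑ i : Fin q → Fin N, |g i ω| := by
        apply Finset.sum_congr rfl
        intro i _
        rw [abs_mul]
        have : |∏ k, spin (σ (i k))| = 1 := by
          rw [Finset.abs_prod]
          simp [abs_spin]
        rw [this, mul_one]

lemma abs_spin_sum_le (N : ℕ) (σ : Config N) : |∑ i, spin (σ i)| ≤ (N : ℝ) := by
  calc |∑ i, spin (σ i)| ≤ ∑ i : Fin N, |spin (σ i)| := Finset.abs_sum_le_sum_abs _ _
    _ = (N : ℝ) := by simp [abs_spin]

/-- Global bound for the exponent. -/
def Mb (N p : ℕ) (β : ℕ → ℝ) (h : ℝ) (g : (q : ℕ) → (Fin q → Fin N) → Ω → ℝ)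
    (t : Finset ℕ) (x : ℝ) (ω : Ω) : ℝ :=
  |x| * Kb N p (g p) ω + (∑ q ∈ t, |β q| * Kb N q (g q) ω) + |h| * N

lemma bF_eq_sum (N p : ℕ) (β : ℕ → ℝ) (h : ℝ) (g : (q : ℕ) → (Fin q → Fin N) → Ω → ℝ)
    (hβ : (Function.support β).Finite) (ω : Ω) (σ : Config N) :
    bF N p β h g ω σ = (∑ q ∈ hβ.toFinset, (if q = p then 0 else β q) * Hp N q (g q) σ ω)
      + h * ∑ i, spin (σ i) := by
  rw [bF]
  congr 1
  apply finsum_eq_finset_sum_of_support_subset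
  rw [Set.Finite.coe_toFinset]
  intro q hq
  by_contra hb
  rw [Function.mem_support, not_ne_iff] at hb
  have hz : (if q = p then 0 else β q) * Hp N q (g q) σ ω = 0 := by
    by_cases hqp : q = p <;> simp [hqp, hb]
  exact hq hz

lemma abs_exponent_le (N p : ℕ) (β : ℕ → ℝ) (h : ℝ) (g : (q : ℕ) → (Fin q → Fin N) → Ω → ℝ)
    (hβ : (Function.support β).Finite) (x : ℝ) (ω : Ω) (σ : Config N) :
    |x * aF N p g ω σ + bF N p β h g ω σ| ≤ Mb N p β h g hβ.toFinset x ω := by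
  rw [bF_eq_sum N p β h g hβ ω σ, Mb]
  have h1 : |x * aF N p g ω σ| ≤ |x| * Kb N p (g p) ω := by
    rw [abs_mul]
    exact mul_le_mul_of_nonneg_left (abs_Hp_le N p (g p) σ ω) (abs_nonneg x)
  have h2 : |∑ q ∈ hβ.toFinset, (if q = p then 0 else β q) * Hp N q (g q) σ ω|
      ≤ ∑ q ∈ hβ.toFinset, |β q| * Kb N q (g q) ω := by
    calc _ ≤ ∑ q ∈ hβ.toFinset, |(if q = p then 0 else β q) * Hp N q (g q) σ ω| :=
          Finset.abs_sum_le_sum_abs _ _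
      _ ≤ ∑ q ∈ hβ.toFinset, |β q| * Kb N q (g q) ω := by
          apply Finset.sum_le_sum
          intro q _
          rw [abs_mul]
          apply mul_le_mul _ (abs_Hp_le N q (g q) σ ω) (abs_nonneg _) (abs_nonneg _)
          by_cases hqp : q = p <;> simp [hqp, abs_nonneg]
  have h3 : |h * ∑ i, spin (σ i)| ≤ |h| * N := by
    rw [abs_mul]
    exact mul_le_mul_of_nonneg_left (abs_spin_sum_le N σ) (abs_nonneg h)
  calc |x * aF N p g ω σ + ((∑ q ∈ hβ.toFinset, (if q = p then 0 else β q) * Hp N q (g q) σ ω)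
        + h * ∑ i, spin (σ i))|
      ≤ |x * aF N p g ω σ| + |∑ q ∈ hβ.toFinset, (if q = p then 0 else β q) * Hp N q (g q) σ ω|
        + |h * ∑ i, spin (σ i)| := by
        have := abs_add_le (x * aF N p g ω σ)
          ((∑ q ∈ hβ.toFinset, (if q = p then 0 else β q) * Hp N q (g q) σ ω)
            + h * ∑ i, spin (σ i))
        have h4 := abs_add_le (∑ q ∈ hβ.toFinset, (if q = p then 0 else β q) * Hp N q (g q) σ ω)
          (h * ∑ i, spin (σ i))
        linarith
    _ ≤ _ := by linarith

section Meas
variable (N p : ℕ) (β : ℕ → ℝ) (h : ℝ) (g : (q : ℕ) → (Fin q → Fin N) → Ω → ℝ)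
  (hg : ∀ q (i : Fin q → Fin N), Measurable (g q i))
  (hβ : (Function.support β).Finite)

include hg in
lemma measurable_Hp (q : ℕ) (σ : Config N) : Measurable (fun ω => Hp N q (g q) σ ω) := by
  apply Measurable.const_mul
  exact Finset.measurable_sum _ (fun i _ => (hg q i).mul_const _)

include hg in
lemma measurable_aF (σ : Config N) : Measurable (fun ω => aF N p g ω σ) :=
  measurable_Hp N g hg p σ

include hg hβ in
lemma measurable_bF (σ : Config N) : Measurable (fun ω => bF N p β h g ω σ) := by
  have : (fun ω => bF N p β h g ω σ)
      = fun ω => (∑ q ∈ hβ.toFinset, (if q = p then 0 else β q) * Hp N q (g q) σ ω)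
        + h * ∑ i, spin (σ i) := by
    funext ω; exact bF_eq_sum N p β h g hβ ω σ
  rw [this]
  apply Measurable.add_const
  exact Finset.measurable_sum _ (fun q _ => (measurable_Hp N g hg q σ).const_mul _)

include hg hβ in
lemma measurable_Zls (x : ℝ) :
    Measurable (fun ω => Zls (aF N p g ω) (bF N p β h g ω) x) := by
  apply Finset.measurable_sum
  intro σ _
  exact (((measurable_aF N p g hg σ).const_mul x).add (measurable_bF N p β h g hg hβ σ)).exp

include hg hβ in
lemma measurable_Dls (x : ℝ) :
    Measurable (fun ω => Dls (aF N p g ω) (bF N p β h g ω) x) := by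
  apply Measurable.div _ (measurable_Zls N p β h g hg hβ x)
  apply Finset.measurable_sum
  intro σ _
  exact (measurable_aF N p g hg σ).mul
    (((measurable_aF N p g hg σ).const_mul x).add (measurable_bF N p β h g hg hβ σ)).exp

include hg hβ in
lemma measurable_psi (x : ℝ) :
    Measurable (fun ω => psiFE N (Function.update β p x) h g ω) := by
  have : (fun ω => psiFE N (Function.update β p x) h g ω)
      = fun ω => (N : ℝ)⁻¹ * Real.log (Zls (aF N p g ω) (bF N p β h g ω) x) := by
    funext ω; exact psiFE_eq N p β h g hβ x ω
  rw [this]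
  exact ((measurable_Zls N p β h g hg hβ x).log).const_mul _

end Meas

section Integ
variable {μ : Measure Ω} [IsProbabilityMeasure μ]

lemma integrable_of_gaussian {f : Ω → ℝ} (hm : Measurable f)
    (hlaw : Measure.map f μ = gaussianReal 0 1) : Integrable f μ := by
  have h1 : Integrable (id : ℝ → ℝ) (Measure.map f μ) := by
    rw [hlaw]; exact integrable_id_gaussianReal
  exact (integrable_map_measure aestronglyMeasurable_id hm.aemeasurable).1 h1

variable (N p : ℕ) (β : ℕ → ℝ) (h : ℝ) (g : (q : ℕ) → (Fin q → Fin N) → Ω → ℝ)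
  (hg : ∀ q (i : Fin q → Fin N), Measurable (g q i))
  (hlaw : ∀ q (i : Fin q → Fin N), Measure.map (g q i) μ = gaussianReal 0 1)
  (hβ : (Function.support β).Finite)

include hg hlaw in
lemma integrable_Kb (q : ℕ) : Integrable (Kb N q (g q)) μ := by
  apply Integrable.const_mul
  apply integrable_finset_sum
  intro i _
  exact (integrable_of_gaussian (hg q i) (hlaw q i)).abs

include hg hlaw hβ in
lemma integrable_Mb (x : ℝ) : Integrable (Mb N p β h g hβ.toFinset x) μ := by
  apply Integrable.add
  apply Integrable.add
  · exact (integrable_Kb N g hg hlaw p).const_mul _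
  · exact integrable_finset_sum _ (fun q _ => (integrable_Kb N g hg hlaw q).const_mul _)
  · exact integrable_const _

include hg hlaw hβ in
lemma integrable_psi (x : ℝ) :
    Integrable (fun ω => psiFE N (Function.update β p x) h g ω) μ := by
  apply Integrable.mono' (g := fun ω => (N : ℝ)⁻¹ *
      (Real.log (Fintype.card (Config N)) + Mb N p β h g hβ.toFinset x ω))
  · exact ((integrable_const _).add (integrable_Mb N p β h g hg hlaw hβ x)).const_mul _
  · exact (measurable_psi N p β h g hg hβ x).aestronglyMeasurable
  · apply Filter.Eventually.of_forall
    intro ω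
    rw [Real.norm_eq_abs, psiFE_eq N p β h g hβ x ω, abs_mul,
      abs_of_nonneg (by positivity : (0:ℝ) ≤ (N:ℝ)⁻¹)]
    apply mul_le_mul_of_nonneg_left _ (by positivity : (0:ℝ) ≤ (N:ℝ)⁻¹)
    exact abs_log_Zls_le _ _ (fun σ => abs_exponent_le N p β h g hβ x ω σ)

include hg hlaw hβ in
lemma integrable_Y :
    Integrable (fun ω => (N : ℝ)⁻¹ * Dls (aF N p g ω) (bF N p β h g ω) (β p)) μ := by
  apply Integrable.mono' (g := fun ω => (N : ℝ)⁻¹ * Kb N p (g p) ω)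
  · exact (integrable_Kb N g hg hlaw p).const_mul _
  · exact ((measurable_Dls N p β h g hg hβ (β p)).const_mul _).aestronglyMeasurable
  · apply Filter.Eventually.of_forall
    intro ω
    rw [Real.norm_eq_abs, abs_mul, abs_of_nonneg (by positivity : (0:ℝ) ≤ (N:ℝ)⁻¹)]
    apply mul_le_mul_of_nonneg_left _ (by positivity : (0:ℝ) ≤ (N:ℝ)⁻¹)
    exact abs_Dls_le _ _ (fun σ => abs_Hp_le N p (g p) σ ω) _

end Integ

section Slope
variable {Ω : Type*} [MeasurableSpace Ω]
variable (N p : ℕ) (β : ℕ → ℝ) (h : ℝ) (g : (q : ℕ) → (Fin q → Fin N) → Ω → ℝ)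
  (hβ : (Function.support β).Finite)

include hβ in
lemma Y_le_slope {x : ℝ} (hx : β p < x) (ω : Ω) :
    (N : ℝ)⁻¹ * Dls (aF N p g ω) (bF N p β h g ω) (β p)
      ≤ (psiFE N (Function.update β p x) h g ω
          - psiFE N (Function.update β p (β p)) h g ω) / (x - β p) := by
  have hδ : 0 < x - β p := by linarith
  have key := Dls_le_slope (aF N p g ω) (bF N p β h g ω) (x := β p) hδ
  have hxx : β p + (x - β p) = x := by ring
  rw [hxx] at key
  have := mul_le_mul_of_nonneg_left key (by positivity : (0:ℝ) ≤ (N:ℝ)⁻¹)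
  rw [psiFE_eq N p β h g hβ x ω, psiFE_eq N p β h g hβ (β p) ω]
  calc (N : ℝ)⁻¹ * Dls (aF N p g ω) (bF N p β h g ω) (β p)
      ≤ (N : ℝ)⁻¹ * ((Real.log (Zls (aF N p g ω) (bF N p β h g ω) x)
          - Real.log (Zls (aF N p g ω) (bF N p β h g ω) (β p))) / (x - β p)) := this
    _ = _ := by ring

include hβ in
lemma slope_le_Y {x : ℝ} (hx : x < β p) (ω : Ω) :
    (psiFE N (Function.update β p (β p)) h g ω
        - psiFE N (Function.update β p x) h g ω) / (β p - x)
      ≤ (N : ℝ)⁻¹ * Dls (aF N p g ω) (bF N p β h g ω) (β p) := by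
  have hδ : 0 < β p - x := by linarith
  have key := slope_le_Dls (aF N p g ω) (bF N p β h g ω) (x := β p) hδ
  have hxx : β p - (β p - x) = x := by ring
  rw [hxx] at key
  have := mul_le_mul_of_nonneg_left key (by positivity : (0:ℝ) ≤ (N:ℝ)⁻¹)
  rw [psiFE_eq N p β h g hβ x ω, psiFE_eq N p β h g hβ (β p) ω]
  calc ((N : ℝ)⁻¹ * Real.log (Zls (aF N p g ω) (bF N p β h g ω) (β p))
          - (N : ℝ)⁻¹ * Real.log (Zls (aF N p g ω) (bF N p β h g ω) x)) / (β p - x)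
      = (N : ℝ)⁻¹ * ((Real.log (Zls (aF N p g ω) (bF N p β h g ω) (β p))
          - Real.log (Zls (aF N p g ω) (bF N p β h g ω) x)) / (β p - x)) := by ring
    _ ≤ (N : ℝ)⁻¹ * Dls (aF N p g ω) (bF N p β h g ω) (β p) := this

end Slope
end Model

section Final
variable {Ω : Type*} [MeasurableSpace Ω]

lemma abs_sub_deriv_le {Y ψp ψ0 ψm Fp F0 Fm P' δ₁ δ₂ : ℝ}
    (hδ₁ : 0 < δ₁) (hδ₂ : 0 < δ₂)
    (h1 : Y ≤ (ψp - ψ0) / δ₁) (h2 : (ψ0 - ψm) / δ₂ ≤ Y) :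
    |Y - P'| ≤ ((|ψp - Fp| + |ψ0 - F0|) / δ₁ + (|ψm - Fm| + |ψ0 - F0|) / δ₂)
      + (|(Fp - F0) / δ₁ - P'| + |(F0 - Fm) / δ₂ - P'|) := by
  have eP : (ψp - ψ0) / δ₁ = ((ψp - Fp) - (ψ0 - F0)) / δ₁ + ((Fp - F0) / δ₁ - P') + P' := by
    ring
  have eM : (ψ0 - ψm) / δ₂ = ((ψ0 - F0) - (ψm - Fm)) / δ₂ + ((F0 - Fm) / δ₂ - P') + P' := by
    ring
  have bP : ((ψp - Fp) - (ψ0 - F0)) / δ₁ ≤ (|ψp - Fp| + |ψ0 - F0|) / δ₁ := by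
    apply div_le_div_of_nonneg_right _ hδ₁.le
    have ha := le_abs_self (ψp - Fp)
    have hb := neg_abs_le (ψ0 - F0)
    linarith
  have bM : ((ψm - Fm) - (ψ0 - F0)) / δ₂ ≤ (|ψm - Fm| + |ψ0 - F0|) / δ₂ := by
    apply div_le_div_of_nonneg_right _ hδ₂.le
    have ha := le_abs_self (ψm - Fm)
    have hb := neg_abs_le (ψ0 - F0)
    linarith
  have rM2 : -((F0 - Fm) / δ₂ - P') ≤ |(F0 - Fm) / δ₂ - P'| := neg_le_abs _
  have rP := le_abs_self ((Fp - F0) / δ₁ - P')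
  have rM := le_abs_self ((F0 - Fm) / δ₂ - P')
  have n₁ : 0 ≤ (|ψp - Fp| + |ψ0 - F0|) / δ₁ :=
    div_nonneg (add_nonneg (abs_nonneg _) (abs_nonneg _)) hδ₁.le
  have n₂ : 0 ≤ (|ψm - Fm| + |ψ0 - F0|) / δ₂ :=
    div_nonneg (add_nonneg (abs_nonneg _) (abs_nonneg _)) hδ₂.le
  have n₃ : 0 ≤ |(Fp - F0) / δ₁ - P'| := abs_nonneg _
  have n₄ : 0 ≤ |(F0 - Fm) / δ₂ - P'| := abs_nonneg _
  have hneg : (ψm - Fm - (ψ0 - F0)) / δ₂ = -((ψ0 - F0 - (ψm - Fm)) / δ₂) := by ring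
  rw [abs_sub_le_iff]
  constructor
  · linarith
  · linarith

lemma conc_bound (μ : Measure Ω) [IsProbabilityMeasure μ] {Y : Ω → ℝ}
    (hY : Integrable Y μ) (P' : ℝ) :
    ∫ ω, |Y ω - ∫ ω', Y ω' ∂μ| ∂μ ≤ 2 * ∫ ω, |Y ω - P'| ∂μ := by
  have hint0 : Integrable (fun ω => |Y ω - P'|) μ := (hY.sub (integrable_const _)).abs
  have hint1 : Integrable (fun ω => |Y ω - P'| + |P' - ∫ ω', Y ω' ∂μ|) μ :=
    hint0.add (integrable_const _)
  have h1 : ∫ ω, |Y ω - ∫ ω', Y ω' ∂μ| ∂μ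
      ≤ ∫ ω, (|Y ω - P'| + |P' - ∫ ω', Y ω' ∂μ|) ∂μ :=
    integral_mono ((hY.sub (integrable_const _)).abs) hint1
      (fun ω => abs_sub_le _ P' _)
  rw [integral_add hint0 (integrable_const _), integral_const] at h1
  simp only [probReal_univ, one_smul] at h1
  have h2 : |P' - ∫ ω', Y ω' ∂μ| ≤ ∫ ω, |Y ω - P'| ∂μ := by
    have he : P' - ∫ ω', Y ω' ∂μ = ∫ ω, (P' - Y ω) ∂μ := by
      rw [integral_sub (integrable_const _) hY, integral_const]
      simp [measure_univ]
    rw [he]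
    calc |∫ ω, (P' - Y ω) ∂μ| ≤ ∫ ω, |P' - Y ω| ∂μ := by
          simpa [Real.norm_eq_abs] using
            norm_integral_le_integral_norm (fun ω => P' - Y ω) (μ := μ)
      _ = ∫ ω, |Y ω - P'| ∂μ :=
          integral_congr_ae (Filter.Eventually.of_forall fun ω => abs_sub_comm _ _)
  linarith

lemma key_bound (μ : Measure Ω) [IsProbabilityMeasure μ]
    (N p : ℕ) (β : ℕ → ℝ) (h : ℝ) (g : (q : ℕ) → (Fin q → Fin N) → Ω → ℝ)
    (hg : ∀ q (i : Fin q → Fin N), Measurable (g q i))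
    (hlaw : ∀ q (i : Fin q → Fin N), Measure.map (g q i) μ = gaussianReal 0 1)
    (hβ : (Function.support β).Finite) {xp xm P' : ℝ}
    (hxp : β p < xp) (hxm : xm < β p) :
    ∫ ω, |(N : ℝ)⁻¹ * Dls (aF N p g ω) (bF N p β h g ω) (β p) - P'| ∂μ
      ≤ (((∫ ω, |psiFE N (Function.update β p xp) h g ω -
              ∫ ω', psiFE N (Function.update β p xp) h g ω' ∂μ| ∂μ) +
          (∫ ω, |psiFE N (Function.update β p (β p)) h g ω -
              ∫ ω', psiFE N (Function.update β p (β p)) h g ω' ∂μ| ∂μ)) / (xp - β p)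
        + ((∫ ω, |psiFE N (Function.update β p xm) h g ω -
              ∫ ω', psiFE N (Function.update β p xm) h g ω' ∂μ| ∂μ) +
          (∫ ω, |psiFE N (Function.update β p (β p)) h g ω -
              ∫ ω', psiFE N (Function.update β p (β p)) h g ω' ∂μ| ∂μ)) / (β p - xm))
      + (|((∫ ω, psiFE N (Function.update β p xp) h g ω ∂μ) -
            ∫ ω, psiFE N (Function.update β p (β p)) h g ω ∂μ) / (xp - β p) - P'|
        + |((∫ ω, psiFE N (Function.update β p (β p)) h g ω ∂μ) -
            ∫ ω, psiFE N (Function.update β p xm) h g ω ∂μ) / (β p - xm) - P'|) := by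
  set Fp := ∫ ω, psiFE N (Function.update β p xp) h g ω ∂μ with hFp
  set F0 := ∫ ω, psiFE N (Function.update β p (β p)) h g ω ∂μ with hF0
  set Fm := ∫ ω, psiFE N (Function.update β p xm) h g ω ∂μ with hFm
  have hδ₁ : (0:ℝ) < xp - β p := by linarith
  have hδ₂ : (0:ℝ) < β p - xm := by linarith
  have intp : Integrable (fun ω => |psiFE N (Function.update β p xp) h g ω - Fp|) μ :=
    ((integrable_psi N p β h g hg hlaw hβ xp).sub (integrable_const _)).abs
  have int0 : Integrable (fun ω => |psiFE N (Function.update β p (β p)) h g ω - F0|) μ :=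
    ((integrable_psi N p β h g hg hlaw hβ (β p)).sub (integrable_const _)).abs
  have intm : Integrable (fun ω => |psiFE N (Function.update β p xm) h g ω - Fm|) μ :=
    ((integrable_psi N p β h g hg hlaw hβ xm).sub (integrable_const _)).abs
  have i₁ : Integrable (fun ω => (|psiFE N (Function.update β p xp) h g ω - Fp| +
      |psiFE N (Function.update β p (β p)) h g ω - F0|) / (xp - β p)) μ :=
    (intp.add int0).div_const _
  have i₂ : Integrable (fun ω => (|psiFE N (Function.update β p xm) h g ω - Fm| +
      |psiFE N (Function.update β p (β p)) h g ω - F0|) / (β p - xm)) μ :=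
    (intm.add int0).div_const _
  have hmono : ∫ ω, |(N : ℝ)⁻¹ * Dls (aF N p g ω) (bF N p β h g ω) (β p) - P'| ∂μ
      ≤ ∫ ω, (((|psiFE N (Function.update β p xp) h g ω - Fp| +
          |psiFE N (Function.update β p (β p)) h g ω - F0|) / (xp - β p)
        + (|psiFE N (Function.update β p xm) h g ω - Fm| +
          |psiFE N (Function.update β p (β p)) h g ω - F0|) / (β p - xm))
      + (|(Fp - F0) / (xp - β p) - P'| + |(F0 - Fm) / (β p - xm) - P'|)) ∂μ := by
    apply integral_mono
    · exact ((integrable_Y N p β h g hg hlaw hβ).sub (integrable_const _)).abs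
    · exact (i₁.add i₂).add (integrable_const _)
    intro ω
    exact abs_sub_deriv_le hδ₁ hδ₂
      (Y_le_slope N p β h g hβ hxp ω) (slope_le_Y N p β h g hβ hxm ω)
  have i₁₂ : Integrable (fun ω => (|psiFE N (Function.update β p xp) h g ω - Fp| +
      |psiFE N (Function.update β p (β p)) h g ω - F0|) / (xp - β p)
    + (|psiFE N (Function.update β p xm) h g ω - Fm| +
      |psiFE N (Function.update β p (β p)) h g ω - F0|) / (β p - xm)) μ := i₁.add i₂
  refine hmono.trans (le_of_eq ?_)
  rw [integral_add i₁₂ (integrable_const _), integral_add i₁ i₂,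
    integral_div, integral_div, integral_add intp int0, integral_add intm int0,
    integral_const]
  simp [measure_univ]

end Final

end

/-- Under the free-energy concentration and convergence hypotheses
(in a neighborhood of `β_p`, with `P` differentiable at `β_p`), the Gibbs average of `H_p`
concentrates: `N⁻¹ E|⟨H_p(σ)⟩ − E⟨H_p(σ)⟩| → 0`. -/
theorem statement11 {Ω : Type*} [MeasurableSpace Ω] (μ : Measure Ω) [IsProbabilityMeasure μ]
    (p : ℕ) (hp : 1 ≤ p) (β : ℕ → ℝ) (hβ : (Function.support β).Finite) (h : ℝ)
    (g : (N : ℕ) → (q : ℕ) → (Fin q → Fin N) → Ω → ℝ)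
    (hg : ∀ N, IsGaussianDisorder N (g N) μ)
    (P : ℝ → ℝ) (ε : ℝ) (hε : 0 < ε)
    (hconc : ∀ x, |x - β p| < ε →
      Tendsto (fun N => ∫ ω, |psiFE N (Function.update β p x) h (g N) ω -
          ∫ ω', psiFE N (Function.update β p x) h (g N) ω' ∂μ| ∂μ) atTop (nhds 0))
    (hF : ∀ x, |x - β p| < ε →
      Tendsto (fun N => ∫ ω, psiFE N (Function.update β p x) h (g N) ω ∂μ)
        atTop (nhds (P x)))
    (hPdiff : DifferentiableAt ℝ P (β p)) :
    Tendsto (fun N : ℕ => (N : ℝ)⁻¹ * ∫ ω,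
        |gibbsAvg N β h (g N) 1 (fun σs ω' => Hp N p (g N p) (σs 0) ω') ω -
          ∫ ω', gibbsAvg N β h (g N) 1
            (fun τs ω'' => Hp N p (g N p) (τs 0) ω'') ω' ∂μ| ∂μ)
      atTop (nhds 0) := by
  have hgm : ∀ N q (i : Fin q → Fin N), Measurable (g N q i) := fun N => (hg N).1
  have hglaw : ∀ N q (i : Fin q → Fin N), Measure.map (g N q i) μ = gaussianReal 0 1 :=
    fun N => (hg N).2.1
  -- Step 1: the main convergence, for the derivative-type quantity `Y`.
  have hYconv : Tendsto (fun N : ℕ => ∫ ω,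
      |(N : ℝ)⁻¹ * Dls (aF N p (g N) ω) (bF N p β h (g N) ω) (β p) -
        ∫ ω', (N : ℝ)⁻¹ * Dls (aF N p (g N) ω') (bF N p β h (g N) ω') (β p) ∂μ| ∂μ)
      atTop (nhds 0) := by
    rw [Metric.tendsto_atTop]
    intro η hη
    have hslope : Tendsto (slope P (β p)) (nhdsWithin (β p) {(β p)}ᶜ)
        (nhds (deriv P (β p))) := hasDerivAt_iff_tendsto_slope.mp hPdiff.hasDerivAt
    -- choose a point to the right
    have hmemp : Set.Ioo (β p) (β p + ε) ∈ nhdsWithin (β p) (Set.Ioi (β p)) :=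
      Ioo_mem_nhdsGT_of_mem ⟨le_rfl, by linarith⟩
    have habsp : ∀ᶠ y in nhdsWithin (β p) (Set.Ioi (β p)),
        |slope P (β p) y - deriv P (β p)| < η / 16 := by
      have h1 := Metric.tendsto_nhds.mp hslope (η / 16) (by positivity)
      have h2 := h1.filter_mono
        (nhdsWithin_mono (β p) (fun y (hy : y ∈ Set.Ioi (β p)) => ne_of_gt hy))
      simpa [Real.dist_eq] using h2
    obtain ⟨xp, hxpa, hxpm⟩ := (habsp.and (eventually_of_mem hmemp (fun y hy => hy))).exists
    -- choose a point to the left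
    have hmemm : Set.Ioo (β p - ε) (β p) ∈ nhdsWithin (β p) (Set.Iio (β p)) :=
      Ioo_mem_nhdsLT_of_mem ⟨by linarith, le_rfl⟩
    have habsm : ∀ᶠ y in nhdsWithin (β p) (Set.Iio (β p)),
        |slope P (β p) y - deriv P (β p)| < η / 16 := by
      have h1 := Metric.tendsto_nhds.mp hslope (η / 16) (by positivity)
      have h2 := h1.filter_mono
        (nhdsWithin_mono (β p) (fun y (hy : y ∈ Set.Iio (β p)) => ne_of_lt hy))
      simpa [Real.dist_eq] using h2
    obtain ⟨xm, hxma, hxmm⟩ := (habsm.and (eventually_of_mem hmemm (fun y hy => hy))).exists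
    have hxp1 : β p < xp := hxpm.1
    have hxm1 : xm < β p := hxmm.2
    have hxpε : |xp - β p| < ε := abs_lt.mpr ⟨by linarith [hxpm.2], by linarith [hxpm.2]⟩
    have hxmε : |xm - β p| < ε := abs_lt.mpr ⟨by linarith [hxmm.1], by linarith⟩
    have h0ε : |β p - β p| < ε := by simpa using hε
    -- limits of the deterministic remainders
    have hslp : slope P (β p) xp = (P xp - P (β p)) / (xp - β p) := slope_def_field P _ _
    have hslm : slope P (β p) xm = (P xm - P (β p)) / (xm - β p) := slope_def_field P _ _
    have hslm' : (P xm - P (β p)) / (xm - β p) = (P (β p) - P xm) / (β p - xm) := by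
      rw [← neg_sub (P xm) (P (β p)), ← neg_sub xm (β p), neg_div_neg_eq]
    have hRp : Tendsto (fun n : ℕ =>
        |((∫ ω, psiFE n (Function.update β p xp) h (g n) ω ∂μ) -
            ∫ ω, psiFE n (Function.update β p (β p)) h (g n) ω ∂μ) / (xp - β p) -
          deriv P (β p)|) atTop
        (nhds |(P xp - P (β p)) / (xp - β p) - deriv P (β p)|) :=
      ((((hF xp hxpε).sub (hF (β p) h0ε)).div_const _).sub_const _).abs
    have hRm : Tendsto (fun n : ℕ =>
        |((∫ ω, psiFE n (Function.update β p (β p)) h (g n) ω ∂μ) -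
            ∫ ω, psiFE n (Function.update β p xm) h (g n) ω ∂μ) / (β p - xm) -
          deriv P (β p)|) atTop
        (nhds |(P (β p) - P xm) / (β p - xm) - deriv P (β p)|) :=
      ((((hF (β p) h0ε).sub (hF xm hxmε)).div_const _).sub_const _).abs
    have hLp : |(P xp - P (β p)) / (xp - β p) - deriv P (β p)| < η / 16 := by
      rw [← hslp]; exact hxpa
    have hLm : |(P (β p) - P xm) / (β p - xm) - deriv P (β p)| < η / 16 := by
      rw [← hslm', ← hslm]; exact hxma
    have hRpev := hRp.eventually_lt_const (by linarith : |(P xp - P (β p)) / (xp - β p) -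
      deriv P (β p)| < η / 8)
    have hRmev := hRm.eventually_lt_const (by linarith : |(P (β p) - P xm) / (β p - xm) -
      deriv P (β p)| < η / 8)
    -- concentration terms
    have hcp : (0:ℝ) < η * (xp - β p) / 32 :=
      div_pos (mul_pos hη (by linarith)) (by norm_num)
    have hcm : (0:ℝ) < η * (β p - xm) / 32 :=
      div_pos (mul_pos hη (by linarith)) (by norm_num)
    have hepev := (hconc xp hxpε).eventually_lt_const hcp
    have he0pev := (hconc (β p) h0ε).eventually_lt_const hcp
    have he0mev := (hconc (β p) h0ε).eventually_lt_const hcm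
    have hemev := (hconc xm hxmε).eventually_lt_const hcm
    obtain ⟨N₀, hN₀⟩ := eventually_atTop.mp
      (hepev.and (he0pev.and (he0mev.and (hemev.and (hRpev.and hRmev)))))
    refine ⟨N₀, fun n hn => ?_⟩
    obtain ⟨h1, h2, h3, h4, h5, h6⟩ := hN₀ n hn
    rw [Real.dist_eq, sub_zero,
      abs_of_nonneg (integral_nonneg (fun ω => abs_nonneg _))]
    have hkey := key_bound μ n p β h (g n) (hgm n) (hglaw n) hβ
      (P' := deriv P (β p)) hxp1 hxm1
    have hcb := conc_bound μ (integrable_Y n p β h (g n) (hgm n) (hglaw n) hβ)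
      (deriv P (β p))
    have hS1 : ((∫ ω, |psiFE n (Function.update β p xp) h (g n) ω -
          ∫ ω', psiFE n (Function.update β p xp) h (g n) ω' ∂μ| ∂μ) +
        (∫ ω, |psiFE n (Function.update β p (β p)) h (g n) ω -
          ∫ ω', psiFE n (Function.update β p (β p)) h (g n) ω' ∂μ| ∂μ)) / (xp - β p)
        < η / 16 := by
      rw [div_lt_iff₀ (by linarith : (0:ℝ) < xp - β p)]
      nlinarith [h1, h2]
    have hS2 : ((∫ ω, |psiFE n (Function.update β p xm) h (g n) ω -
          ∫ ω', psiFE n (Function.update β p xm) h (g n) ω' ∂μ| ∂μ) +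
        (∫ ω, |psiFE n (Function.update β p (β p)) h (g n) ω -
          ∫ ω', psiFE n (Function.update β p (β p)) h (g n) ω' ∂μ| ∂μ)) / (β p - xm)
        < η / 16 := by
      rw [div_lt_iff₀ (by linarith : (0:ℝ) < β p - xm)]
      nlinarith [h4, h3]
    calc ∫ ω, |(n : ℝ)⁻¹ * Dls (aF n p (g n) ω) (bF n p β h (g n) ω) (β p) -
          ∫ ω', (n : ℝ)⁻¹ * Dls (aF n p (g n) ω') (bF n p β h (g n) ω') (β p) ∂μ| ∂μ
        ≤ 2 * ∫ ω, |(n : ℝ)⁻¹ * Dls (aF n p (g n) ω) (bF n p β h (g n) ω) (β p) -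
            deriv P (β p)| ∂μ := hcb
      _ < η := by linarith [hkey, hS1, hS2, h5, h6]
  -- Step 2: identify the statement's quantity with the `Y` quantity.
  have heq : ∀ N : ℕ, (N : ℝ)⁻¹ * ∫ ω,
      |gibbsAvg N β h (g N) 1 (fun σs ω' => Hp N p (g N p) (σs 0) ω') ω -
        ∫ ω', gibbsAvg N β h (g N) 1
          (fun τs ω'' => Hp N p (g N p) (τs 0) ω'') ω' ∂μ| ∂μ
      = ∫ ω, |(N : ℝ)⁻¹ * Dls (aF N p (g N) ω) (bF N p β h (g N) ω) (β p) -
          ∫ ω', (N : ℝ)⁻¹ * Dls (aF N p (g N) ω') (bF N p β h (g N) ω') (β p) ∂μ| ∂μ := by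
    intro N
    have hG : ∀ ω, gibbsAvg N β h (g N) 1 (fun σs ω' => Hp N p (g N p) (σs 0) ω') ω
        = Dls (aF N p (g N) ω) (bF N p β h (g N) ω) (β p) :=
      fun ω => gibbsAvg_eq N p β h (g N) hβ ω
    simp only [hG]
    rw [← integral_const_mul]
    congr 1
    funext ω
    rw [integral_const_mul, ← mul_sub, abs_mul,
      abs_of_nonneg (by positivity : (0:ℝ) ≤ (N:ℝ)⁻¹)]
  exact Filter.Tendsto.congr (fun N => (heq N).symm) hYconv
end
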